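/- arXiv:1204.1003 — 9 statements merged into one kernel-verified Lean document; each statement's English description precedes it below -/
import Mathlib

section
/- For any point M inside triangle ABC with side lengths a=|BC|, b=|CA|, c=|AB|, if R_A denotes the distance from M to vertex A and r_b, r_c denote the distances from M to sides CA and AB respectively, then a·R_A ≥ c·r_b + b·r_c. -/
open EuclideanGeometry Metric

private lemma cs2 (w1 w2 u1 u2 : ℝ) :
    (w1 * u2 - w2 * u1) ^ 2 ≤ (w1 ^ 2 + w2 ^ 2) * (u1 ^ 2 + u2 ^ 2) := by
  nlinarith [sq_nonneg (w1 * u1 + w2 * u2)]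

set_option maxHeartbeats 2000000 in

theorem stmt_0 (A B C M : EuclideanSpace ℝ (Fin 2))
    (hABC : AffineIndependent ℝ ![A, B, C])
    (hM : M ∈ interior (convexHull ℝ {A, B, C})) :
    dist B C * dist M A ≥
      dist A B * infDist M (affineSpan ℝ {C, A} : Set (EuclideanSpace ℝ (Fin 2))) +
      dist C A * infDist M (affineSpan ℝ {A, B} : Set (EuclideanSpace ℝ (Fin 2))) := by
  classical
  have hAB : A ≠ B := by
    have := hABC.injective.ne (show (0 : Fin 3) ≠ 1 by decide)
    simpa using this
  have hCA : C ≠ A := by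
    have := hABC.injective.ne (show (2 : Fin 3) ≠ 0 by decide)
    simpa using this
  set a1 : ℝ := A 0 - M 0 with ha1
  set a2 : ℝ := A 1 - M 1 with ha2
  set b1 : ℝ := B 0 - M 0 with hb1
  set b2 : ℝ := B 1 - M 1 with hb2
  set c1 : ℝ := C 0 - M 0 with hc1
  set c2 : ℝ := C 1 - M 1 with hc2
  set Sa : ℝ := (b1 - c1) ^ 2 + (b2 - c2) ^ 2 with hSa
  set SR : ℝ := a1 ^ 2 + a2 ^ 2 with hSR
  set Sb : ℝ := (c1 - a1) ^ 2 + (c2 - a2) ^ 2 with hSb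
  set Sc : ℝ := (a1 - b1) ^ 2 + (a2 - b2) ^ 2 with hSc
  set s1 : ℝ := c1 * a2 - c2 * a1 with hs1
  set s2 : ℝ := a1 * b2 - a2 * b1 with hs2
  clear_value a1 a2 b1 b2 c1 c2 Sa SR Sb Sc s1 s2
  have ddist : ∀ x y : EuclideanSpace ℝ (Fin 2),
      dist x y = Real.sqrt ((x 0 - y 0) ^ 2 + (x 1 - y 1) ^ 2) := by
    intro x y
    rw [EuclideanSpace.dist_eq, Fin.sum_univ_two, Real.dist_eq, Real.dist_eq,
      sq_abs, sq_abs]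
  have hpos : ∀ P Q : EuclideanSpace ℝ (Fin 2), P ≠ Q →
      0 < (Q 0 - P 0) ^ 2 + (Q 1 - P 1) ^ 2 := by
    intro P Q hPQ
    rcases eq_or_lt_of_le (show (0:ℝ) ≤ (Q 0 - P 0) ^ 2 + (Q 1 - P 1) ^ 2 by positivity)
      with h | h
    · exfalso
      have h1 : (Q 0 - P 0) ^ 2 = 0 := by nlinarith [sq_nonneg (Q 0 - P 0), sq_nonneg (Q 1 - P 1)]
      have h2 : (Q 1 - P 1) ^ 2 = 0 := by nlinarith [sq_nonneg (Q 0 - P 0), sq_nonneg (Q 1 - P 1)]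
      apply hPQ
      have e1 : P 0 = Q 0 := by nlinarith [sq_eq_zero_iff.mp h1]
      have e2 : P 1 = Q 1 := by nlinarith [sq_eq_zero_iff.mp h2]
      ext i
      fin_cases i
      · exact e1
      · exact e2
    · exact h
  have hdBC : dist B C = Real.sqrt Sa := by
    rw [ddist]; congr 1; rw [hSa, hb1, hb2, hc1, hc2]; ring
  have hdMA : dist M A = Real.sqrt SR := by
    rw [ddist]; congr 1; rw [hSR, ha1, ha2]; ring
  have hdCA : dist C A = Real.sqrt Sb := by
    rw [ddist]; congr 1; rw [hSb, ha1, ha2, hc1, hc2]; ring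
  have hdAB : dist A B = Real.sqrt Sc := by
    rw [ddist]; congr 1; rw [hSc, ha1, ha2, hb1, hb2]; ring
  have hSb0 : 0 < Sb := by
    rw [show Sb = (A 0 - C 0) ^ 2 + (A 1 - C 1) ^ 2 by rw [hSb, ha1, ha2, hc1, hc2]; ring]
    exact hpos C A hCA
  have hSc0 : 0 < Sc := by
    rw [show Sc = (B 0 - A 0) ^ 2 + (B 1 - A 1) ^ 2 by rw [hSc, ha1, ha2, hb1, hb2]; ring]
    exact hpos A B hAB
  -- convex combination from hull membership
  have hMhull : M ∈ convexHull ℝ ({A, B, C} : Set (EuclideanSpace ℝ (Fin 2))) :=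
    interior_subset hM
  rw [convexHull_insert ⟨B, by simp⟩, mem_convexJoin] at hMhull
  obtain ⟨x, hx, y, hy, hxy⟩ := hMhull
  rw [Set.mem_singleton_iff] at hx
  rw [hx] at hxy
  rw [convexHull_pair] at hy
  obtain ⟨u, v, hu, hv, huv, hyy⟩ := hy
  obtain ⟨p, q, hp, hq, hpq, hmm⟩ := hxy
  rw [← hyy] at hmm
  have hcomp : ∀ i, p * A i + q * (u * B i + v * C i) = M i := by
    intro i
    have := congrFun (congrArg (fun z : EuclideanSpace ℝ (Fin 2) => (z : Fin 2 → ℝ)) hmm) i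
    simp at this
    linarith [this]
  have e1 : p * a1 + (q * u) * b1 + (q * v) * c1 = 0 := by
    rw [ha1, hb1, hc1]
    linear_combination hcomp 0 - M 0 * hpq - M 0 * q * huv
  have e2 : p * a2 + (q * u) * b2 + (q * v) * c2 = 0 := by
    rw [ha2, hb2, hc2]
    linear_combination hcomp 1 - M 1 * hpq - M 1 * q * huv
  have hrel : (q * u) * s2 = (q * v) * s1 := by
    rw [hs1, hs2]; linear_combination a1 * e2 - a2 * e1
  have hqu : 0 ≤ q * u := mul_nonneg hq hu
  have hqv : 0 ≤ q * v := mul_nonneg hq hv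
  have hsign : 0 ≤ s1 * s2 := by
    rcases eq_or_lt_of_le hqu with h | h
    · rcases eq_or_lt_of_le hqv with h' | h'
      · have hq0 : q = 0 := by linear_combination -q * huv - h - h'
        have hp1 : p = 1 := by linarith
        have ha10 : a1 = 0 := by linear_combination e1 + b1 * h + c1 * h' - a1 * hp1
        have ha20 : a2 = 0 := by linear_combination e2 + b2 * h + c2 * h' - a2 * hp1
        rw [hs1, hs2, ha10, ha20]; ring_nf; rfl
      · have hss : s1 = (q * u / (q * v)) * s2 := by
          rw [div_mul_eq_mul_div, eq_div_iff h'.ne']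
          linarith [hrel]
        rw [hss]
        have hnn : 0 ≤ q * u / (q * v) := div_nonneg hqu (le_of_lt h')
        have := mul_nonneg hnn (sq_nonneg s2)
        linarith [this]
    · have hss : s2 = (q * v / (q * u)) * s1 := by
        rw [div_mul_eq_mul_div, eq_div_iff h.ne']
        linarith [hrel]
      rw [hss]
      have hnn : 0 ≤ q * v / (q * u) := div_nonneg hqv (le_of_lt h)
      have := mul_nonneg hnn (sq_nonneg s1)
      linarith [this]
  -- distance to a line through two points is at most the distance to the foot
  have hfoot : ∀ (P Q : EuclideanSpace ℝ (Fin 2)), P ≠ Q →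
      infDist M (affineSpan ℝ {P, Q} : Set (EuclideanSpace ℝ (Fin 2))) ≤
        |(P 0 - M 0) * (Q 1 - M 1) - (P 1 - M 1) * (Q 0 - M 0)| /
          Real.sqrt ((Q 0 - P 0) ^ 2 + (Q 1 - P 1) ^ 2) := by
    intro P Q hPQ
    have hS0 : 0 < (Q 0 - P 0) ^ 2 + (Q 1 - P 1) ^ 2 := hpos P Q hPQ
    set S : ℝ := (Q 0 - P 0) ^ 2 + (Q 1 - P 1) ^ 2 with hS
    clear_value S
    set t : ℝ := ((M 0 - P 0) * (Q 0 - P 0) + (M 1 - P 1) * (Q 1 - P 1)) / S with ht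
    clear_value t
    set F : EuclideanSpace ℝ (Fin 2) := AffineMap.lineMap P Q t with hF
    clear_value F
    have hFmem : F ∈ (affineSpan ℝ {P, Q} : Set (EuclideanSpace ℝ (Fin 2))) := by
      rw [hF]; exact AffineMap.lineMap_mem_affineSpan_pair t P Q
    refine le_trans (infDist_le_dist_of_mem hFmem) ?_
    have hFi : ∀ i, F i = P i + t * (Q i - P i) := by
      intro i
      rw [hF, AffineMap.lineMap_apply_module']
      simp [PiLp.add_apply, PiLp.smul_apply, PiLp.sub_apply]
      ring
    rw [ddist, hFi 0, hFi 1]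
    have hE : (M 0 - (P 0 + t * (Q 0 - P 0))) ^ 2 + (M 1 - (P 1 + t * (Q 1 - P 1))) ^ 2
        = ((P 0 - M 0) * (Q 1 - M 1) - (P 1 - M 1) * (Q 0 - M 0)) ^ 2 / S := by
      rw [ht, hS]
      have hS0' : (Q 0 - P 0) ^ 2 + (Q 1 - P 1) ^ 2 ≠ 0 := by rw [← hS]; exact hS0.ne'
      field_simp
      ring
    rw [hE, Real.sqrt_div (sq_nonneg _), Real.sqrt_sq_eq_abs]
  have h1inf : infDist M (affineSpan ℝ {C, A} : Set (EuclideanSpace ℝ (Fin 2)))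
      ≤ |s1| / Real.sqrt Sb := by
    have h := hfoot C A hCA
    rw [show (C 0 - M 0) * (A 1 - M 1) - (C 1 - M 1) * (A 0 - M 0) = s1 by
        rw [hs1, ha1, ha2, hc1, hc2],
      show (A 0 - C 0) ^ 2 + (A 1 - C 1) ^ 2 = Sb by
        rw [hSb, ha1, ha2, hc1, hc2]; ring] at h
    exact h
  have h2inf : infDist M (affineSpan ℝ {A, B} : Set (EuclideanSpace ℝ (Fin 2)))
      ≤ |s2| / Real.sqrt Sc := by
    have h := hfoot A B hAB
    rw [show (A 0 - M 0) * (B 1 - M 1) - (A 1 - M 1) * (B 0 - M 0) = s2 by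
        rw [hs2, ha1, ha2, hb1, hb2],
      show (B 0 - A 0) ^ 2 + (B 1 - A 1) ^ 2 = Sc by
        rw [hSc, ha1, ha2, hb1, hb2]; ring] at h
    exact h
  -- the key algebraic inequality
  have hSa0 : (0:ℝ) ≤ Sa := by rw [hSa]; positivity
  have hSR0 : (0:ℝ) ≤ SR := by rw [hSR]; positivity
  have hβ : 0 < Real.sqrt Sb := Real.sqrt_pos.mpr hSb0
  have hγ : 0 < Real.sqrt Sc := Real.sqrt_pos.mpr hSc0
  have hkey : Sc * |s1| + Sb * |s2| ≤ Real.sqrt Sa * Real.sqrt SR * (Real.sqrt Sb * Real.sqrt Sc) := by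
    have hsq : (Sc * s1 + Sb * s2) ^ 2 ≤ Sb * SR * Sc * Sa := by
      have h := cs2 (((c1-a1)*(b1-a1) - (c2-a2)*(b2-a2))*a1 + ((c1-a1)*(b2-a2) + (c2-a2)*(b1-a1))*a2)
        (((c1-a1)*(b2-a2) + (c2-a2)*(b1-a1))*a1 - ((c1-a1)*(b1-a1) - (c2-a2)*(b2-a2))*a2)
        (b1 - c1) (b2 - c2)
      calc (Sc * s1 + Sb * s2) ^ 2
          = ((((c1-a1)*(b1-a1) - (c2-a2)*(b2-a2))*a1 + ((c1-a1)*(b2-a2) + (c2-a2)*(b1-a1))*a2) * (b2 - c2)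
            - ((((c1-a1)*(b2-a2) + (c2-a2)*(b1-a1))*a1 - ((c1-a1)*(b1-a1) - (c2-a2)*(b2-a2))*a2)) * (b1 - c1)) ^ 2 := by
            rw [hSc, hSb, hs1, hs2]; ring
        _ ≤ ((((c1-a1)*(b1-a1) - (c2-a2)*(b2-a2))*a1 + ((c1-a1)*(b2-a2) + (c2-a2)*(b1-a1))*a2) ^ 2
            + ((((c1-a1)*(b2-a2) + (c2-a2)*(b1-a1))*a1 - ((c1-a1)*(b1-a1) - (c2-a2)*(b2-a2))*a2)) ^ 2)
            * ((b1 - c1) ^ 2 + (b2 - c2) ^ 2) := h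
        _ = Sb * SR * Sc * Sa := by rw [hSb, hSR, hSc, hSa]; ring
    have habs : (Sc * |s1| + Sb * |s2|) ^ 2 = (Sc * s1 + Sb * s2) ^ 2 := by
      have h12 : |s1| * |s2| = s1 * s2 := by rw [← abs_mul, abs_of_nonneg hsign]
      have hsq1 : |s1| ^ 2 = s1 ^ 2 := sq_abs s1
      have hsq2 : |s2| ^ 2 = s2 ^ 2 := sq_abs s2
      linear_combination Sc ^ 2 * hsq1 + Sb ^ 2 * hsq2 + 2 * Sc * Sb * h12
    have hL0 : 0 ≤ Sc * |s1| + Sb * |s2| := by positivity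
    have hprod : (Real.sqrt Sa * Real.sqrt SR * (Real.sqrt Sb * Real.sqrt Sc)) ^ 2
        = Sa * SR * (Sb * Sc) := by
      rw [mul_pow, mul_pow, mul_pow, Real.sq_sqrt hSa0,
        Real.sq_sqrt hSR0, Real.sq_sqrt hSb0.le, Real.sq_sqrt hSc0.le]
    have hR0 : 0 ≤ Real.sqrt Sa * Real.sqrt SR * (Real.sqrt Sb * Real.sqrt Sc) := by positivity
    have hLR : (Sc * |s1| + Sb * |s2|) ^ 2
        ≤ (Real.sqrt Sa * Real.sqrt SR * (Real.sqrt Sb * Real.sqrt Sc)) ^ 2 := by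
      rw [habs, hprod]; linarith [hsq]
    exact (pow_le_pow_iff_left₀ hL0 hR0 two_ne_zero).mp hLR
  have hmain : Real.sqrt Sc * (|s1| / Real.sqrt Sb) + Real.sqrt Sb * (|s2| / Real.sqrt Sc)
      ≤ Real.sqrt Sa * Real.sqrt SR := by
    have hβγ : 0 < Real.sqrt Sb * Real.sqrt Sc := mul_pos hβ hγ
    rw [← mul_le_mul_iff_of_pos_right hβγ]
    have hb2 : Real.sqrt Sb * Real.sqrt Sb = Sb := Real.mul_self_sqrt hSb0.le
    have hc2 : Real.sqrt Sc * Real.sqrt Sc = Sc := Real.mul_self_sqrt hSc0.le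
    have heq : (Real.sqrt Sc * (|s1| / Real.sqrt Sb) + Real.sqrt Sb * (|s2| / Real.sqrt Sc))
        * (Real.sqrt Sb * Real.sqrt Sc) = Sc * |s1| + Sb * |s2| := by
      have d1 : |s1| / Real.sqrt Sb * Real.sqrt Sb = |s1| := div_mul_cancel₀ _ hβ.ne'
      have d2 : |s2| / Real.sqrt Sc * Real.sqrt Sc = |s2| := div_mul_cancel₀ _ hγ.ne'
      calc (Real.sqrt Sc * (|s1| / Real.sqrt Sb) + Real.sqrt Sb * (|s2| / Real.sqrt Sc))
          * (Real.sqrt Sb * Real.sqrt Sc)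
          = (Real.sqrt Sc * Real.sqrt Sc) * (|s1| / Real.sqrt Sb * Real.sqrt Sb)
            + (Real.sqrt Sb * Real.sqrt Sb) * (|s2| / Real.sqrt Sc * Real.sqrt Sc) := by ring
        _ = Sc * |s1| + Sb * |s2| := by rw [d1, d2, hb2, hc2]
    rw [heq]
    exact hkey
  rw [ge_iff_le, hdBC, hdMA, hdCA, hdAB]
  calc Real.sqrt Sc * infDist M (affineSpan ℝ {C, A} : Set (EuclideanSpace ℝ (Fin 2)))
        + Real.sqrt Sb * infDist M (affineSpan ℝ {A, B} : Set (EuclideanSpace ℝ (Fin 2)))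
      ≤ Real.sqrt Sc * (|s1| / Real.sqrt Sb) + Real.sqrt Sb * (|s2| / Real.sqrt Sc) :=
        add_le_add (mul_le_mul_of_nonneg_left h1inf (Real.sqrt_nonneg _))
          (mul_le_mul_of_nonneg_left h2inf (Real.sqrt_nonneg _))
    _ ≤ Real.sqrt Sa * Real.sqrt SR := hmain
end

section
/- For any point M inside triangle ABC, R_A + R_B + R_C ≥ (c/b + b/c)·r_a + (c/a + a/c)·r_b + (a/b + b/a)·r_c, where R_A, R_B, R_C are distances from M to the vertices and r_a, r_b, r_c are distances from M to the opposite sides. -/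
open EuclideanGeometry Metric

section ErdosMordellAux

lemma em_e2_ext (x y : EuclideanSpace ℝ (Fin 2)) (h0 : x 0 = y 0) (h1 : x 1 = y 1) : x = y := by
  ext i; fin_cases i <;> assumption

lemma em_smul_vadd_coord (v A : EuclideanSpace ℝ (Fin 2)) (r : ℝ) (i : Fin 2) :
    (r • v +ᵥ A) i = r * v i + A i := by
  simp [PiLp.smul_apply, PiLp.add_apply]

lemma em_dist_coords (x y : EuclideanSpace ℝ (Fin 2)) :
    dist x y = Real.sqrt ((x 0 - y 0)^2 + (x 1 - y 1)^2) := by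
  rw [EuclideanSpace.dist_eq]
  simp [Fin.sum_univ_two, Real.dist_eq, sq_abs]

lemma em_tri_decomp (A B C M : EuclideanSpace ℝ (Fin 2))
    (hM : M ∈ convexHull ℝ ({A, B, C} : Set (EuclideanSpace ℝ (Fin 2)))) :
    ∃ α β γ : ℝ, 0 ≤ α ∧ 0 ≤ β ∧ 0 ≤ γ ∧ α + β + γ = 1 ∧ M = α • A + β • B + γ • C := by
  rw [convexHull_insert (by simp), convexHull_pair] at hM
  rw [mem_convexJoin] at hM
  obtain ⟨x, hx, y, hy, hMs⟩ := hM
  rw [Set.mem_singleton_iff] at hx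
  subst hx
  rw [segment_eq_image₂] at hy hMs
  obtain ⟨⟨bb, cc⟩, ⟨hb, hc, hbc⟩, rfl⟩ := hy
  obtain ⟨⟨a, t⟩, ⟨ha, ht, hat⟩, rfl⟩ := hMs
  exact ⟨a, t*bb, t*cc, ha, by positivity, by positivity, by nlinarith, by module⟩

lemma em_cross_ne (A B C : EuclideanSpace ℝ (Fin 2)) (h : AffineIndependent ℝ ![A, B, C]) :
    (B 0 - A 0) * (C 1 - A 1) - (B 1 - A 1) * (C 0 - A 0) ≠ 0 := by
  intro hcr
  apply affineIndependent_iff_not_collinear_set.mp h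
  have hA : A ∈ ({A, B, C} : Set (EuclideanSpace ℝ (Fin 2))) := by simp
  rw [collinear_iff_of_mem hA]
  by_cases h0 : B 0 - A 0 = 0 ∧ B 1 - A 1 = 0
  · refine ⟨C - A, fun p hp => ?_⟩
    simp only [Set.mem_insert_iff, Set.mem_singleton_iff] at hp
    rcases hp with rfl | rfl | rfl
    · exact ⟨0, (em_e2_ext _ _ (by rw [em_smul_vadd_coord]; ring) (by rw [em_smul_vadd_coord]; ring)).symm⟩
    · exact ⟨0, (em_e2_ext _ _ (by rw [em_smul_vadd_coord]; simp [PiLp.sub_apply]; linarith [h0.1])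
        (by rw [em_smul_vadd_coord]; simp [PiLp.sub_apply]; linarith [h0.2])).symm⟩
    · exact ⟨1, (em_e2_ext _ _ (by rw [em_smul_vadd_coord, PiLp.sub_apply]; ring)
        (by rw [em_smul_vadd_coord, PiLp.sub_apply]; ring)).symm⟩
  · refine ⟨B - A, fun p hp => ?_⟩
    simp only [Set.mem_insert_iff, Set.mem_singleton_iff] at hp
    have hu : B 0 - A 0 ≠ 0 ∨ B 1 - A 1 ≠ 0 := by tauto
    rcases hp with rfl | rfl | hp
    · exact ⟨0, (em_e2_ext _ _ (by rw [em_smul_vadd_coord]; ring) (by rw [em_smul_vadd_coord]; ring)).symm⟩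
    · exact ⟨1, (em_e2_ext _ _ (by rw [em_smul_vadd_coord, PiLp.sub_apply]; ring)
        (by rw [em_smul_vadd_coord, PiLp.sub_apply]; ring)).symm⟩
    · rw [hp]
      rcases hu with hu | hu
      · exact ⟨(C 0 - A 0) / (B 0 - A 0), (em_e2_ext _ _
          (by rw [em_smul_vadd_coord, PiLp.sub_apply]; field_simp; ring)
          (by rw [em_smul_vadd_coord, PiLp.sub_apply]; field_simp; nlinarith [hcr])).symm⟩
      · exact ⟨(C 1 - A 1) / (B 1 - A 1), (em_e2_ext _ _
          (by rw [em_smul_vadd_coord, PiLp.sub_apply]; field_simp; nlinarith [hcr])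
          (by rw [em_smul_vadd_coord, PiLp.sub_apply]; field_simp; ring)).symm⟩

lemma em_real_key (u0 u1 w0 w1 : ℝ) (h : u0^2 + u1^2 ≠ 0) :
    Real.sqrt ((w0 - ((u0*w0+u1*w1)/(u0^2+u1^2))*u0)^2 + (w1 - ((u0*w0+u1*w1)/(u0^2+u1^2))*u1)^2)
      * Real.sqrt (u0^2+u1^2) = |u0*w1 - u1*w0| := by
  rw [← Real.sqrt_mul (by positivity)]
  rw [show ((w0 - ((u0*w0+u1*w1)/(u0^2+u1^2))*u0)^2 + (w1 - ((u0*w0+u1*w1)/(u0^2+u1^2))*u1)^2) * (u0^2+u1^2)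
      = (u0*w1 - u1*w0)^2 by field_simp; ring]
  exact Real.sqrt_sq_eq_abs _

lemma em_infDist_line_le (P Q M : EuclideanSpace ℝ (Fin 2))
    (hPQ : (Q 0 - P 0)^2 + (Q 1 - P 1)^2 ≠ 0) :
    infDist M (affineSpan ℝ {P, Q} : Set (EuclideanSpace ℝ (Fin 2))) * dist P Q ≤
      |(Q 0 - P 0) * (M 1 - P 1) - (Q 1 - P 1) * (M 0 - P 0)| := by
  have hFc : ∀ (kk : ℝ) (i : Fin 2), (AffineMap.lineMap P Q kk : EuclideanSpace ℝ (Fin 2)) i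
      = kk * (Q i - P i) + P i := by
    intro kk i
    simp [AffineMap.lineMap_apply, PiLp.smul_apply, PiLp.sub_apply, PiLp.add_apply]
    try ring
  set kk : ℝ := ((Q 0 - P 0)*(M 0 - P 0) + (Q 1 - P 1)*(M 1 - P 1))/((Q 0 - P 0)^2 + (Q 1 - P 1)^2) with hkk
  have h1 : infDist M (affineSpan ℝ {P, Q} : Set (EuclideanSpace ℝ (Fin 2)))
      ≤ dist M (AffineMap.lineMap P Q kk) :=
    infDist_le_dist_of_mem (AffineMap.lineMap_mem_affineSpan_pair kk P Q)
  have hdMF : dist M (AffineMap.lineMap P Q kk : EuclideanSpace ℝ (Fin 2))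
      = Real.sqrt (((M 0 - P 0) - kk*(Q 0 - P 0))^2 + ((M 1 - P 1) - kk*(Q 1 - P 1))^2) := by
    rw [em_dist_coords, hFc kk 0, hFc kk 1]
    congr 1
    ring
  have hdPQ : dist P Q = Real.sqrt ((Q 0 - P 0)^2 + (Q 1 - P 1)^2) := by
    rw [em_dist_coords]
    congr 1
    ring
  calc infDist M (affineSpan ℝ {P, Q} : Set (EuclideanSpace ℝ (Fin 2))) * dist P Q
      ≤ dist M (AffineMap.lineMap P Q kk) * dist P Q := mul_le_mul_of_nonneg_right h1 dist_nonneg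
    _ = |(Q 0 - P 0) * (M 1 - P 1) - (Q 1 - P 1) * (M 0 - P 0)| := by
        rw [hdMF, hdPQ, hkk]
        exact em_real_key _ _ _ _ hPQ

set_option maxHeartbeats 1000000 in
lemma em_scalar_key (u0 u1 v0 v1 w0 w1 β γ rb rc : ℝ)
    (hβ : 0 ≤ β) (hγ : 0 ≤ γ)
    (hw0 : w0 = β*u0 + γ*v0) (hw1 : w1 = β*u1 + γ*v1)
    (hbsq : v0^2 + v1^2 ≠ 0) (hcsq : u0^2 + u1^2 ≠ 0)
    (hb' : rb * Real.sqrt (v0^2 + v1^2) ≤ β * |u0*v1 - u1*v0|)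
    (hc' : rc * Real.sqrt (u0^2 + u1^2) ≤ γ * |u0*v1 - u1*v0|) :
    Real.sqrt (u0^2 + u1^2) * rb + Real.sqrt (v0^2 + v1^2) * rc ≤
      Real.sqrt ((u0 - v0)^2 + (u1 - v1)^2) * Real.sqrt (w0^2 + w1^2) := by
  have hbsp : (0:ℝ) < v0^2 + v1^2 := lt_of_le_of_ne (by positivity) (Ne.symm hbsq)
  have hcsp : (0:ℝ) < u0^2 + u1^2 := lt_of_le_of_ne (by positivity) (Ne.symm hcsq)
  have hb : 0 < Real.sqrt (v0^2 + v1^2) := Real.sqrt_pos.mpr hbsp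
  have hc : 0 < Real.sqrt (u0^2 + u1^2) := Real.sqrt_pos.mpr hcsp
  have hb2 : Real.sqrt (v0^2 + v1^2) ^ 2 = v0^2 + v1^2 := Real.sq_sqrt (by positivity)
  have hc2 : Real.sqrt (u0^2 + u1^2) ^ 2 = u0^2 + u1^2 := Real.sq_sqrt (by positivity)
  obtain ⟨z0, hz0⟩ : ∃ z : ℝ, z = (u0^2+u1^2)*v1 - (v0^2+v1^2)*u1 := ⟨_, rfl⟩
  obtain ⟨z1, hz1⟩ : ∃ z : ℝ, z = (v0^2+v1^2)*u0 - (u0^2+u1^2)*v0 := ⟨_, rfl⟩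
  have h1 : w0*z0 + w1*z1 = (u0*v1 - u1*v0)*(γ*(v0^2+v1^2) + β*(u0^2+u1^2)) := by
    rw [hz0, hz1, hw0, hw1]; ring
  have h2 : z0^2 + z1^2 = (v0^2+v1^2)*(u0^2+u1^2)*((u0-v0)^2+(u1-v1)^2) := by
    rw [hz0, hz1]; ring
  have h3 : (w0*z0 + w1*z1)^2 ≤ (w0^2+w1^2)*(z0^2+z1^2) := by
    nlinarith [sq_nonneg (w0*z1 - w1*z0)]
  have h4 : |u0*v1 - u1*v0| * (γ*(v0^2+v1^2) + β*(u0^2+u1^2)) = |w0*z0 + w1*z1| := by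
    rw [h1, abs_mul, abs_of_nonneg (show (0:ℝ) ≤ γ*(v0^2+v1^2) + β*(u0^2+u1^2) by positivity)]
  have h5 : |w0*z0 + w1*z1| ≤ Real.sqrt (w0^2+w1^2) * Real.sqrt (z0^2+z1^2) := by
    rw [← Real.sqrt_sq_eq_abs, ← Real.sqrt_mul (by positivity)]
    exact Real.sqrt_le_sqrt h3
  have h6 : Real.sqrt (z0^2+z1^2) = Real.sqrt (v0^2+v1^2) * Real.sqrt (u0^2+u1^2)
      * Real.sqrt ((u0-v0)^2+(u1-v1)^2) := by
    rw [h2, Real.sqrt_mul (by positivity), Real.sqrt_mul (by positivity)]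
  have h7 : |u0*v1 - u1*v0| * (γ*(v0^2+v1^2) + β*(u0^2+u1^2)) ≤
      Real.sqrt (w0^2+w1^2) * (Real.sqrt (v0^2+v1^2) * Real.sqrt (u0^2+u1^2)
        * Real.sqrt ((u0-v0)^2+(u1-v1)^2)) := by
    rw [h4, ← h6]; exact h5
  rw [← mul_le_mul_iff_of_pos_right (show (0:ℝ) < Real.sqrt (v0^2+v1^2) * Real.sqrt (u0^2+u1^2) from by positivity)]
  have e1 : (Real.sqrt (u0^2 + u1^2) * rb + Real.sqrt (v0^2 + v1^2) * rc) *
      (Real.sqrt (v0^2+v1^2) * Real.sqrt (u0^2+u1^2))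
      = Real.sqrt (u0^2+u1^2)^2 * (rb * Real.sqrt (v0^2+v1^2))
        + Real.sqrt (v0^2+v1^2)^2 * (rc * Real.sqrt (u0^2+u1^2)) := by ring
  calc (Real.sqrt (u0^2 + u1^2) * rb + Real.sqrt (v0^2 + v1^2) * rc) *
      (Real.sqrt (v0^2+v1^2) * Real.sqrt (u0^2+u1^2))
      ≤ Real.sqrt (u0^2+u1^2)^2 * (β * |u0*v1 - u1*v0|)
        + Real.sqrt (v0^2+v1^2)^2 * (γ * |u0*v1 - u1*v0|) := by
        rw [e1]
        gcongr
    _ = |u0*v1 - u1*v0| * (γ*(v0^2+v1^2) + β*(u0^2+u1^2)) := by rw [hb2, hc2]; ring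
    _ ≤ Real.sqrt (w0^2+w1^2) * (Real.sqrt (v0^2+v1^2) * Real.sqrt (u0^2+u1^2)
        * Real.sqrt ((u0-v0)^2+(u1-v1)^2)) := h7
    _ = Real.sqrt ((u0 - v0)^2 + (u1 - v1)^2) * Real.sqrt (w0^2 + w1^2) *
        (Real.sqrt (v0^2+v1^2) * Real.sqrt (u0^2+u1^2)) := by ring

lemma em_key (A B C M : EuclideanSpace ℝ (Fin 2)) (β γ : ℝ) (hβ : 0 ≤ β) (hγ : 0 ≤ γ)
    (hw0 : M 0 - A 0 = β*(B 0 - A 0) + γ*(C 0 - A 0))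
    (hw1 : M 1 - A 1 = β*(B 1 - A 1) + γ*(C 1 - A 1))
    (hcr : (B 0 - A 0)*(C 1 - A 1) - (B 1 - A 1)*(C 0 - A 0) ≠ 0) :
    dist A B * infDist M (affineSpan ℝ {C, A} : Set (EuclideanSpace ℝ (Fin 2))) +
      dist C A * infDist M (affineSpan ℝ {A, B} : Set (EuclideanSpace ℝ (Fin 2))) ≤
      dist B C * dist M A := by
  have hcsq : (B 0 - A 0)^2 + (B 1 - A 1)^2 ≠ 0 := by
    intro h
    apply hcr
    have h0 : B 0 - A 0 = 0 := by nlinarith [sq_nonneg (B 0 - A 0), sq_nonneg (B 1 - A 1)]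
    have h1 : B 1 - A 1 = 0 := by nlinarith [sq_nonneg (B 0 - A 0), sq_nonneg (B 1 - A 1)]
    rw [h0, h1]; ring
  have hbsq : (C 0 - A 0)^2 + (C 1 - A 1)^2 ≠ 0 := by
    intro h
    apply hcr
    have h0 : C 0 - A 0 = 0 := by nlinarith [sq_nonneg (C 0 - A 0), sq_nonneg (C 1 - A 1)]
    have h1 : C 1 - A 1 = 0 := by nlinarith [sq_nonneg (C 0 - A 0), sq_nonneg (C 1 - A 1)]
    rw [h0, h1]; ring
  have hc' := em_infDist_line_le A B M hcsq
  have hb' := em_infDist_line_le C A M (by intro h; apply hbsq; nlinarith [h])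
  have ec : (B 0 - A 0)*(M 1 - A 1) - (B 1 - A 1)*(M 0 - A 0)
      = γ * ((B 0 - A 0)*(C 1 - A 1) - (B 1 - A 1)*(C 0 - A 0)) := by
    rw [hw0, hw1]; ring
  have eb : (A 0 - C 0)*(M 1 - C 1) - (A 1 - C 1)*(M 0 - C 0)
      = β * ((B 0 - A 0)*(C 1 - A 1) - (B 1 - A 1)*(C 0 - A 0)) := by
    linear_combination (A 0 - C 0)*hw1 - (A 1 - C 1)*hw0
  have dAB : dist A B = Real.sqrt ((B 0 - A 0)^2 + (B 1 - A 1)^2) := by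
    rw [em_dist_coords]; congr 1; ring
  have dCA : dist C A = Real.sqrt ((C 0 - A 0)^2 + (C 1 - A 1)^2) := em_dist_coords C A
  have dBC : dist B C = Real.sqrt (((B 0 - A 0) - (C 0 - A 0))^2 + ((B 1 - A 1) - (C 1 - A 1))^2) := by
    rw [em_dist_coords]; congr 1; ring
  have dMA : dist M A = Real.sqrt ((M 0 - A 0)^2 + (M 1 - A 1)^2) := em_dist_coords M A
  have hb2 : infDist M (affineSpan ℝ {C, A} : Set (EuclideanSpace ℝ (Fin 2))) *
      Real.sqrt ((C 0 - A 0)^2 + (C 1 - A 1)^2)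
      ≤ β * |(B 0 - A 0)*(C 1 - A 1) - (B 1 - A 1)*(C 0 - A 0)| := by
    rw [← dCA]
    calc infDist M (affineSpan ℝ {C, A} : Set (EuclideanSpace ℝ (Fin 2))) * dist C A
        ≤ |(A 0 - C 0)*(M 1 - C 1) - (A 1 - C 1)*(M 0 - C 0)| := hb'
      _ = β * |(B 0 - A 0)*(C 1 - A 1) - (B 1 - A 1)*(C 0 - A 0)| := by
          rw [eb, abs_mul, abs_of_nonneg hβ]
  have hc2 : infDist M (affineSpan ℝ {A, B} : Set (EuclideanSpace ℝ (Fin 2))) *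
      Real.sqrt ((B 0 - A 0)^2 + (B 1 - A 1)^2)
      ≤ γ * |(B 0 - A 0)*(C 1 - A 1) - (B 1 - A 1)*(C 0 - A 0)| := by
    rw [← dAB]
    calc infDist M (affineSpan ℝ {A, B} : Set (EuclideanSpace ℝ (Fin 2))) * dist A B
        ≤ |(B 0 - A 0)*(M 1 - A 1) - (B 1 - A 1)*(M 0 - A 0)| := hc'
      _ = γ * |(B 0 - A 0)*(C 1 - A 1) - (B 1 - A 1)*(C 0 - A 0)| := by
          rw [ec, abs_mul, abs_of_nonneg hγ]
  rw [dAB, dCA, dBC, dMA]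
  exact em_scalar_key (B 0 - A 0) (B 1 - A 1) (C 0 - A 0) (C 1 - A 1) (M 0 - A 0) (M 1 - A 1)
    β γ _ _ hβ hγ hw0 hw1 hbsq hcsq hb2 hc2

end ErdosMordellAux

theorem stmt_1 (A B C M : EuclideanSpace ℝ (Fin 2))
    (hABC : AffineIndependent ℝ ![A, B, C])
    (hM : M ∈ interior (convexHull ℝ {A, B, C})) :
    dist M A + dist M B + dist M C ≥
      (dist A B / dist C A + dist C A / dist A B) *
        infDist M (affineSpan ℝ {B, C} : Set (EuclideanSpace ℝ (Fin 2))) +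
      (dist A B / dist B C + dist B C / dist A B) *
        infDist M (affineSpan ℝ {C, A} : Set (EuclideanSpace ℝ (Fin 2))) +
      (dist B C / dist C A + dist C A / dist B C) *
        infDist M (affineSpan ℝ {A, B} : Set (EuclideanSpace ℝ (Fin 2))) := by
  have hM' : M ∈ convexHull ℝ ({A, B, C} : Set (EuclideanSpace ℝ (Fin 2))) := interior_subset hM
  obtain ⟨α, β, γ, hα, hβ, hγ, hsum, hMeq⟩ := em_tri_decomp A B C M hM'
  have hcoord : ∀ i : Fin 2, M i = α * A i + β * B i + γ * C i := by
    intro i; rw [hMeq]; simp [PiLp.smul_apply, PiLp.add_apply]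
  have cr := em_cross_ne A B C hABC
  have crB : (C 0 - B 0)*(A 1 - B 1) - (C 1 - B 1)*(A 0 - B 0) ≠ 0 :=
    fun h => cr (by linear_combination h)
  have crC : (A 0 - C 0)*(B 1 - C 1) - (A 1 - C 1)*(B 0 - C 0) ≠ 0 :=
    fun h => cr (by linear_combination h)
  have hA0 : M 0 - A 0 = β*(B 0 - A 0) + γ*(C 0 - A 0) := by
    rw [hcoord 0]; linear_combination A 0 * hsum
  have hA1 : M 1 - A 1 = β*(B 1 - A 1) + γ*(C 1 - A 1) := by
    rw [hcoord 1]; linear_combination A 1 * hsum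
  have hB0 : M 0 - B 0 = γ*(C 0 - B 0) + α*(A 0 - B 0) := by
    rw [hcoord 0]; linear_combination B 0 * hsum
  have hB1 : M 1 - B 1 = γ*(C 1 - B 1) + α*(A 1 - B 1) := by
    rw [hcoord 1]; linear_combination B 1 * hsum
  have hC0 : M 0 - C 0 = α*(A 0 - C 0) + β*(B 0 - C 0) := by
    rw [hcoord 0]; linear_combination C 0 * hsum
  have hC1 : M 1 - C 1 = α*(A 1 - C 1) + β*(B 1 - C 1) := by
    rw [hcoord 1]; linear_combination C 1 * hsum
  have k1 := em_key A B C M β γ hβ hγ hA0 hA1 cr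
  have k2 := em_key B C A M γ α hγ hα hB0 hB1 crB
  have k3 := em_key C A B M α β hα hβ hC0 hC1 crC
  -- positivity of side lengths
  have hAB : A ≠ B := by
    intro h
    have h01 : (0 : Fin 3) = 1 := hABC.injective (by simpa using h)
    exact absurd h01 (by decide)
  have hBC : B ≠ C := by
    intro h
    have h12 : (1 : Fin 3) = 2 := hABC.injective (by simpa using h)
    exact absurd h12 (by decide)
  have hCA : C ≠ A := by
    intro h
    have h20 : (2 : Fin 3) = 0 := hABC.injective (by simpa using h)
    exact absurd h20 (by decide)
  have ha : 0 < dist B C := dist_pos.mpr hBC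
  have hb : 0 < dist C A := dist_pos.mpr hCA
  have hc : 0 < dist A B := dist_pos.mpr hAB
  set ra := infDist M (affineSpan ℝ {B, C} : Set (EuclideanSpace ℝ (Fin 2))) with hra
  set rb := infDist M (affineSpan ℝ {C, A} : Set (EuclideanSpace ℝ (Fin 2))) with hrb
  set rc := infDist M (affineSpan ℝ {A, B} : Set (EuclideanSpace ℝ (Fin 2))) with hrc
  have g1 : (dist A B * rb + dist C A * rc) / dist B C ≤ dist M A := by
    rw [div_le_iff₀ ha]; linarith [k1]
  have g2 : (dist B C * rc + dist A B * ra) / dist C A ≤ dist M B := by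
    rw [div_le_iff₀ hb]; linarith [k2]
  have g3 : (dist C A * ra + dist B C * rb) / dist A B ≤ dist M C := by
    rw [div_le_iff₀ hc]; linarith [k3]
  have esum : (dist A B / dist C A + dist C A / dist A B) * ra +
      (dist A B / dist B C + dist B C / dist A B) * rb +
      (dist B C / dist C A + dist C A / dist B C) * rc
      = (dist A B * rb + dist C A * rc) / dist B C +
        (dist B C * rc + dist A B * ra) / dist C A +
        (dist C A * ra + dist B C * rb) / dist A B := by
    field_simp
    ring
  rw [ge_iff_le, esum]
  linarith [g1, g2, g3]
end

section
/- For any point M inside triangle ABC, R_A + R_B + R_C ≥ 2(r_a + r_b + r_c) (the Erdős–Mordell inequality). -/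
open EuclideanGeometry Metric

/-- 2D cross product of two vectors. -/
noncomputable def cr (u v : EuclideanSpace ℝ (Fin 2)) : ℝ := u 0 * v 1 - u 1 * v 0

lemma normsq (u : EuclideanSpace ℝ (Fin 2)) : ‖u‖ ^ 2 = u 0 ^ 2 + u 1 ^ 2 := by
  rw [EuclideanSpace.norm_eq, Real.sq_sqrt (by positivity)]
  simp [Fin.sum_univ_two, sq]

lemma abs_cr_le (u v : EuclideanSpace ℝ (Fin 2)) : |cr u v| ≤ ‖u‖ * ‖v‖ := by
  have h1 := normsq u
  have h2 := normsq v
  have h3 : (0:ℝ) ≤ ‖u‖ := norm_nonneg u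
  have h4 : (0:ℝ) ≤ ‖v‖ := norm_nonneg v
  rcases abs_cases (cr u v) with ⟨h, _⟩ | ⟨h, _⟩ <;> rw [h] <;> unfold cr <;>
    nlinarith [sq_nonneg (u 0 * v 0 + u 1 * v 1), sq_nonneg (‖u‖ - ‖v‖), sq_nonneg (‖u‖ + ‖v‖),
      mul_nonneg h3 h4]

/-- The distance from `M` to the line through `P` and `Q` is at most
`|cr (M - P) (Q - P)| / dist P Q` (it is in fact equal). -/
lemma infDist_le_cr (M P Q : EuclideanSpace ℝ (Fin 2)) (h : P ≠ Q) :
    infDist M (affineSpan ℝ {P, Q} : Set (EuclideanSpace ℝ (Fin 2))) ≤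
      |cr (M - P) (Q - P)| / dist P Q := by
  have hvne : Q - P ≠ 0 := sub_ne_zero.mpr (Ne.symm h)
  have hv : (0:ℝ) < ‖Q - P‖ := norm_pos_iff.mpr hvne
  set t : ℝ := (inner ℝ (M - P) (Q - P) : ℝ) / ‖Q - P‖ ^ 2 with ht
  have hF : AffineMap.lineMap P Q t ∈ (affineSpan ℝ {P, Q} : Set (EuclideanSpace ℝ (Fin 2))) :=
    AffineMap.lineMap_mem_affineSpan_pair t P Q
  refine le_trans (infDist_le_dist_of_mem hF) ?_
  have hdist : dist M (AffineMap.lineMap P Q t) = ‖(M - P) - t • (Q - P)‖ := by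
    rw [dist_eq_norm, AffineMap.lineMap_apply]
    congr 1
    simp [vsub_eq_sub, vadd_eq_add]
    abel
  rw [hdist, show dist P Q = ‖Q - P‖ by rw [dist_eq_norm, norm_sub_rev],
    le_div_iff₀ hv]
  set u := M - P
  set v := Q - P
  have hv2 : ‖v‖ ^ 2 ≠ 0 := pow_ne_zero 2 (ne_of_gt hv)
  have hinner : (inner ℝ u v : ℝ) = u 0 * v 0 + u 1 * v 1 := by
    simp [PiLp.inner_apply, Fin.sum_univ_two, RCLike.inner_apply, conj_trivial, mul_comm]
  have hw0 : (u - t • v) 0 = u 0 - t * v 0 := by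
    simp [PiLp.sub_apply, PiLp.smul_apply, smul_eq_mul]
  have hw1 : (u - t • v) 1 = u 1 - t * v 1 := by
    simp [PiLp.sub_apply, PiLp.smul_apply, smul_eq_mul]
  have key : (‖u - t • v‖ * ‖v‖) ^ 2 = (cr u v) ^ 2 := by
    rw [mul_pow, normsq, normsq, hw0, hw1, ht, hinner]
    rw [normsq v] at hv2 ⊢
    unfold cr
    field_simp
    ring
  have h1 : 0 ≤ ‖u - t • v‖ * ‖v‖ := mul_nonneg (norm_nonneg _) (norm_nonneg _)
  have h2 : 0 ≤ |cr u v| := abs_nonneg _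
  nlinarith [key, h1, h2, sq_abs (cr u v)]

set_option maxHeartbeats 1000000 in
/-- The key Erdős–Mordell estimate `a * R_A ≥ b * r_c + c * r_b` at vertex `A`,
for `M` a convex combination of the vertices. -/
lemma key_lemma (A B C M : EuclideanSpace ℝ (Fin 2)) (β γ : ℝ)
    (hβ : 0 ≤ β) (hγ : 0 ≤ γ)
    (hM0 : M 0 = (1 - β - γ) * A 0 + β * B 0 + γ * C 0)
    (hM1 : M 1 = (1 - β - γ) * A 1 + β * B 1 + γ * C 1)
    (hb : C ≠ A) (hc : A ≠ B) :
    dist C A * (|cr (M - A) (B - A)| / dist A B) +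
      dist A B * (|cr (M - C) (A - C)| / dist C A) ≤ dist B C * dist M A := by
  set a := dist B C with hadef
  set b := dist C A with hbdef
  set c := dist A B with hcdef
  have hbpos : 0 < b := dist_pos.mpr hb
  have hcpos : 0 < c := dist_pos.mpr hc
  have ha0 : 0 ≤ a := dist_nonneg
  have ha2 : a ^ 2 = (B 0 - C 0) ^ 2 + (B 1 - C 1) ^ 2 := by
    rw [hadef, dist_eq_norm, normsq]; simp [PiLp.sub_apply]
  have hb2 : b ^ 2 = (C 0 - A 0) ^ 2 + (C 1 - A 1) ^ 2 := by
    rw [hbdef, dist_eq_norm, normsq]; simp [PiLp.sub_apply]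
  have hc2 : c ^ 2 = (A 0 - B 0) ^ 2 + (A 1 - B 1) ^ 2 := by
    rw [hcdef, dist_eq_norm, normsq]; simp [PiLp.sub_apply]
  set D : ℝ := cr (B - A) (C - A) with hD
  have hcrc : cr (M - A) (B - A) = -(γ * D) := by
    unfold D; unfold cr; simp only [PiLp.sub_apply]
    rw [hM0, hM1]; ring
  have hcrb : cr (M - C) (A - C) = -(β * D) := by
    unfold D; unfold cr; simp only [PiLp.sub_apply]
    rw [hM0, hM1]; ring
  set v : EuclideanSpace ℝ (Fin 2) := (c ^ 2) • (C - A) - (b ^ 2) • (B - A) with hv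
  have hv0 : v 0 = c ^ 2 * (C 0 - A 0) - b ^ 2 * (B 0 - A 0) := by
    simp [hv, PiLp.sub_apply, PiLp.smul_apply, smul_eq_mul]
  have hv1 : v 1 = c ^ 2 * (C 1 - A 1) - b ^ 2 * (B 1 - A 1) := by
    simp [hv, PiLp.sub_apply, PiLp.smul_apply, smul_eq_mul]
  have hcrv : cr (M - A) v = (c ^ 2 * β + b ^ 2 * γ) * D := by
    unfold D; unfold cr
    rw [hv0, hv1]; simp only [PiLp.sub_apply]
    rw [hM0, hM1, hb2, hc2]; ring
  have hnv2 : ‖v‖ ^ 2 = (a * b * c) ^ 2 := by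
    rw [normsq, hv0, hv1, show (a*b*c)^2 = a^2 * b^2 * c^2 by ring, ha2, hb2, hc2]; ring
  have hnv : ‖v‖ = a * b * c := by
    rw [← Real.sqrt_sq (norm_nonneg v), hnv2, Real.sqrt_sq (by positivity)]
  have hbound : (c ^ 2 * β + b ^ 2 * γ) * |D| ≤ dist M A * (a * b * c) := by
    have h1 := abs_cr_le (M - A) v
    rw [hcrv, hnv, abs_mul, abs_of_nonneg
      (add_nonneg (mul_nonneg (sq_nonneg c) hβ) (mul_nonneg (sq_nonneg b) hγ))] at h1
    rwa [dist_eq_norm]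
  rw [hcrc, hcrb, abs_neg, abs_neg, abs_mul, abs_mul,
    abs_of_nonneg hγ, abs_of_nonneg hβ]
  have heq : b * (γ * |D| / c) + c * (β * |D| / b) = (c ^ 2 * β + b ^ 2 * γ) * |D| / (b * c) := by
    field_simp; ring
  rw [heq, div_le_iff₀ (by positivity)]
  nlinarith [hbound]

lemma frac_ge_two (x y : ℝ) (hx : 0 < x) (hy : 0 < y) : 2 ≤ x / y + y / x := by
  rw [div_add_div _ _ (ne_of_gt hy) (ne_of_gt hx), le_div_iff₀ (by positivity)]
  nlinarith [sq_nonneg (x - y)]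

set_option maxHeartbeats 1000000 in
theorem stmt_2 (A B C M : EuclideanSpace ℝ (Fin 2))
    (hABC : AffineIndependent ℝ ![A, B, C])
    (hM : M ∈ interior (convexHull ℝ {A, B, C})) :
    dist M A + dist M B + dist M C ≥
      2 * (infDist M (affineSpan ℝ {B, C} : Set (EuclideanSpace ℝ (Fin 2))) +
           infDist M (affineSpan ℝ {C, A} : Set (EuclideanSpace ℝ (Fin 2))) +
           infDist M (affineSpan ℝ {A, B} : Set (EuclideanSpace ℝ (Fin 2)))) := by
  classical
  have hinj := hABC.injective
  have hAB : A ≠ B := fun e => absurd (hinj (show ![A,B,C] 0 = ![A,B,C] 1 by simpa using e)) (by decide)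
  have hAC : A ≠ C := fun e => absurd (hinj (show ![A,B,C] 0 = ![A,B,C] 2 by simpa using e)) (by decide)
  have hBC : B ≠ C := fun e => absurd (hinj (show ![A,B,C] 1 = ![A,B,C] 2 by simpa using e)) (by decide)
  have hMc : M ∈ convexHull ℝ ({A, B, C} : Set (EuclideanSpace ℝ (Fin 2))) := interior_subset hM
  have hset : ({A, B, C} : Set (EuclideanSpace ℝ (Fin 2))) =
      (({A, B, C} : Finset (EuclideanSpace ℝ (Fin 2))) : Set (EuclideanSpace ℝ (Fin 2))) := by simp
  rw [hset, Finset.convexHull_eq] at hMc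
  obtain ⟨w, hw0, hw1, hwM⟩ := hMc
  rw [Finset.centerMass_eq_of_sum_1 _ _ hw1] at hwM
  rw [Finset.sum_insert (by simp [hAB, hAC]), Finset.sum_insert (by simp [hBC]),
    Finset.sum_singleton] at hwM hw1
  simp only [id] at hwM
  set α := w A with hαdef
  set β := w B with hβdef
  set γ := w C with hγdef
  have hαn : 0 ≤ α := hw0 A (by simp)
  have hβn : 0 ≤ β := hw0 B (by simp)
  have hγn : 0 ≤ γ := hw0 C (by simp)
  have h0 : α * A 0 + β * B 0 + γ * C 0 = M 0 := by
    have := congrArg (fun x => x 0) hwM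
    simpa [PiLp.add_apply, PiLp.smul_apply, smul_eq_mul, add_assoc] using this
  have h1 : α * A 1 + β * B 1 + γ * C 1 = M 1 := by
    have := congrArg (fun x => x 1) hwM
    simpa [PiLp.add_apply, PiLp.smul_apply, smul_eq_mul, add_assoc] using this
  -- key inequalities at the three vertices
  have k1 : dist C A * (|cr (M - A) (B - A)| / dist A B) +
      dist A B * (|cr (M - C) (A - C)| / dist C A) ≤ dist B C * dist M A := by
    refine key_lemma A B C M β γ hβn hγn ?_ ?_ hAC.symm hAB
    · linear_combination -h0 + A 0 * hw1
    · linear_combination -h1 + A 1 * hw1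
  have k2 : dist A B * (|cr (M - B) (C - B)| / dist B C) +
      dist B C * (|cr (M - A) (B - A)| / dist A B) ≤ dist C A * dist M B := by
    refine key_lemma B C A M γ α hγn hαn ?_ ?_ hAB hBC
    · linear_combination -h0 + B 0 * hw1
    · linear_combination -h1 + B 1 * hw1
  have k3 : dist B C * (|cr (M - C) (A - C)| / dist C A) +
      dist C A * (|cr (M - B) (C - B)| / dist B C) ≤ dist A B * dist M C := by
    refine key_lemma C A B M α β hαn hβn ?_ ?_ hBC hAC.symm
    · linear_combination -h0 + C 0 * hw1
    · linear_combination -h1 + C 1 * hw1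
  set a := dist B C with hadef
  set b := dist C A with hbdef
  set c := dist A B with hcdef
  have hapos : 0 < a := dist_pos.mpr hBC
  have hbpos : 0 < b := dist_pos.mpr (Ne.symm hAC)
  have hcpos : 0 < c := dist_pos.mpr hAB
  set ra := |cr (M - B) (C - B)| / a with hradef
  set rb := |cr (M - C) (A - C)| / b with hrbdef
  set rc := |cr (M - A) (B - A)| / c with hrcdef
  have hira : infDist M (affineSpan ℝ {B, C} : Set (EuclideanSpace ℝ (Fin 2))) ≤ ra :=
    infDist_le_cr M B C hBC
  have hirb : infDist M (affineSpan ℝ {C, A} : Set (EuclideanSpace ℝ (Fin 2))) ≤ rb :=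
    infDist_le_cr M C A hAC.symm
  have hirc : infDist M (affineSpan ℝ {A, B} : Set (EuclideanSpace ℝ (Fin 2))) ≤ rc :=
    infDist_le_cr M A B hAB
  have hran : 0 ≤ ra := by positivity
  have hrbn : 0 ≤ rb := by positivity
  have hrcn : 0 ≤ rc := by positivity
  -- from the key inequalities
  have e1 : (b * rc + c * rb) / a ≤ dist M A := by
    rw [div_le_iff₀ hapos]
    have : dist M A * a = a * dist M A := mul_comm _ _
    linarith [k1]
  have e2 : (c * ra + a * rc) / b ≤ dist M B := by
    rw [div_le_iff₀ hbpos]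
    have : dist M B * b = b * dist M B := mul_comm _ _
    linarith [k2]
  have e3 : (a * rb + b * ra) / c ≤ dist M C := by
    rw [div_le_iff₀ hcpos]
    have : dist M C * c = c * dist M C := mul_comm _ _
    linarith [k3]
  have sum_eq : (b * rc + c * rb) / a + (c * ra + a * rc) / b + (a * rb + b * ra) / c =
      ra * (c / b + b / c) + rb * (c / a + a / c) + rc * (b / a + a / b) := by
    field_simp; ring
  have g1 : 2 * ra ≤ ra * (c / b + b / c) :=
    le_mul_of_le_mul_of_nonneg_left (by nlinarith [frac_ge_two c b hcpos hbpos]) le_rfl hran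
  have g2 : 2 * rb ≤ rb * (c / a + a / c) := by
    nlinarith [frac_ge_two c a hcpos hapos, mul_le_mul_of_nonneg_left
      (frac_ge_two c a hcpos hapos) hrbn]
  have g3 : 2 * rc ≤ rc * (b / a + a / b) := by
    nlinarith [mul_le_mul_of_nonneg_left (frac_ge_two b a hbpos hapos) hrcn]
  have g1' : 2 * ra ≤ ra * (c / b + b / c) := by
    nlinarith [mul_le_mul_of_nonneg_left (frac_ge_two c b hcpos hbpos) hran]
  linarith [e1, e2, e3, sum_eq, g1', g2, g3, hira, hirb, hirc]
end

section
/- For any point M inside triangle ABC, R_A · R_B · R_C ≥ 8 · r_a · r_b · r_c (inequality of Child). -/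
open EuclideanGeometry Metric RealInnerProductSpace

private abbrev V2 := EuclideanSpace ℝ (Fin 2)

private lemma normsq_combo (x y : V2) (α β : ℝ) :
    ‖α • x + β • y‖ ^ 2 = α ^ 2 * ‖x‖ ^ 2 + 2 * (α * β) * ⟪x, y⟫ + β ^ 2 * ‖y‖ ^ 2 := by
  rw [norm_add_sq_real]
  simp [norm_smul, real_inner_smul_left, real_inner_smul_right, mul_pow]
  ring

private lemma inner_combo (x y : V2) (α β γ δ : ℝ) :
    ⟪α • x + β • y, γ • x + δ • y⟫ =
      α * γ * ‖x‖ ^ 2 + (α * δ + β * γ) * ⟪x, y⟫ + β * δ * ‖y‖ ^ 2 := by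
  simp only [inner_add_left, inner_add_right, real_inner_smul_left, real_inner_smul_right,
    real_inner_self_eq_norm_sq]
  rw [real_inner_comm y x]
  ring

private lemma gram_combo (x y : V2) (α β γ δ : ℝ) :
    ‖α • x + β • y‖ ^ 2 * ‖γ • x + δ • y‖ ^ 2 - ⟪α • x + β • y, γ • x + δ • y⟫ ^ 2 =
      (α * δ - β * γ) ^ 2 * (‖x‖ ^ 2 * ‖y‖ ^ 2 - ⟪x, y⟫ ^ 2) := by
  rw [normsq_combo, normsq_combo, inner_combo]
  ring

private lemma key_vertex (x y : V2) {α β : ℝ} (hα : 0 ≤ α) (hβ : 0 ≤ β) :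
    2 * α * β * (‖x‖ ^ 2 * ‖y‖ ^ 2 - ⟪x, y⟫ ^ 2) ≤
      ‖α • x + β • y‖ ^ 2 * (‖x‖ * ‖y‖ - ⟪x, y⟫) := by
  have hCS := real_inner_le_norm x y
  rw [normsq_combo]
  nlinarith [mul_nonneg (sub_nonneg.2 hCS) (sq_nonneg (α * ‖x‖ - β * ‖y‖)),
    mul_nonneg (mul_nonneg hα hβ) (sub_nonneg.2 hCS)]

private lemma infDist_line (A B M : V2) (h : B ≠ A) :
    infDist M (affineSpan ℝ {A, B} : Set V2) * ‖B - A‖ =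
      Real.sqrt (‖M - A‖ ^ 2 * ‖B - A‖ ^ 2 - ⟪M - A, B - A⟫ ^ 2) := by
  set u : V2 := B - A with hu
  set v : V2 := M - A with hv
  have hun : (0:ℝ) < ‖u‖ := by
    rw [norm_pos_iff]
    exact sub_ne_zero.2 h
  have hX : (0:ℝ) ≤ ‖v‖ ^ 2 * ‖u‖ ^ 2 - ⟪v, u⟫ ^ 2 := by
    have habs := abs_real_inner_le_norm v u
    nlinarith [abs_nonneg (⟪v, u⟫ : ℝ), sq_abs (⟪v, u⟫ : ℝ), norm_nonneg v, norm_nonneg u]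
  have hform : ∀ t : ℝ, ‖v - t • u‖ ^ 2 = ‖v‖ ^ 2 - 2 * t * ⟪v, u⟫ + t ^ 2 * ‖u‖ ^ 2 := by
    intro t
    rw [norm_sub_sq_real]
    rw [real_inner_smul_right, norm_smul]
    simp [mul_pow]
    ring
  apply le_antisymm
  · -- upper bound via the foot of the perpendicular
    set t₀ : ℝ := ⟪v, u⟫ / ‖u‖ ^ 2 with ht₀
    have hmem : (t₀ • u) +ᵥ A ∈ affineSpan ℝ ({A, B} : Set V2) := by
      refine (vadd_left_mem_affineSpan_pair).2 ⟨t₀, ?_⟩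
      simp [hu, vsub_eq_sub]
    have hle : infDist M (affineSpan ℝ {A, B} : Set V2) ≤ ‖v - t₀ • u‖ := by
      have := infDist_le_dist_of_mem (x := M) (SetLike.mem_coe.2 hmem)
      rwa [dist_eq_norm, show M - (t₀ • u +ᵥ A) = v - t₀ • u by
        simp [hv, vadd_eq_add]; abel] at this
    calc infDist M (affineSpan ℝ {A, B} : Set V2) * ‖u‖ ≤ ‖v - t₀ • u‖ * ‖u‖ := by
          exact mul_le_mul_of_nonneg_right hle (le_of_lt hun)
      _ = Real.sqrt (‖v‖ ^ 2 * ‖u‖ ^ 2 - ⟪v, u⟫ ^ 2) := by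
          rw [show ‖v - t₀ • u‖ * ‖u‖ = Real.sqrt ((‖v - t₀ • u‖ * ‖u‖) ^ 2) by
            rw [Real.sqrt_sq (by positivity)]]
          congr 1
          rw [mul_pow, hform t₀, ht₀]
          field_simp
          ring
  · -- lower bound
    rw [← div_le_iff₀ hun]
    by_contra hcon
    push_neg at hcon
    obtain ⟨y, hy, hlt⟩ := (infDist_lt_iff ⟨A, SetLike.mem_coe.2
      (left_mem_affineSpan_pair ℝ A B)⟩).1 hcon
    have hy' : ∃ t : ℝ, y = t • u + A := by
      have hmem : y ∈ affineSpan ℝ ({A, B} : Set V2) := SetLike.mem_coe.1 hy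
      have : (y -ᵥ A) +ᵥ A ∈ affineSpan ℝ ({A, B} : Set V2) := by
        rwa [vsub_vadd]
      obtain ⟨t, ht⟩ := (vadd_left_mem_affineSpan_pair).1 this
      refine ⟨t, ?_⟩
      simp only [vsub_eq_sub] at ht
      show y = t • (B - A) + A
      rw [ht]; abel
    obtain ⟨t, rfl⟩ := hy'
    have hdist : dist M (t • u + A) = ‖v - t • u‖ := by
      rw [dist_eq_norm, hv]; congr 1; abel
    rw [hdist] at hlt
    have hge : Real.sqrt (‖v‖ ^ 2 * ‖u‖ ^ 2 - ⟪v, u⟫ ^ 2) / ‖u‖ ≤ ‖v - t • u‖ := by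
      rw [div_le_iff₀ hun]
      have h1 : Real.sqrt (‖v‖ ^ 2 * ‖u‖ ^ 2 - ⟪v, u⟫ ^ 2) ≤
          Real.sqrt ((‖v - t • u‖ * ‖u‖) ^ 2) := by
        apply Real.sqrt_le_sqrt
        rw [mul_pow, hform t]
        nlinarith [sq_nonneg (t * ‖u‖ ^ 2 - ⟪v, u⟫)]
      rwa [Real.sqrt_sq (by positivity)] at h1
    linarith


set_option maxHeartbeats 1000000 in
theorem stmt_3 (A B C M : EuclideanSpace ℝ (Fin 2))
    (hABC : AffineIndependent ℝ ![A, B, C])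
    (hM : M ∈ interior (convexHull ℝ {A, B, C})) :
    dist M A * dist M B * dist M C ≥
      8 * (infDist M (affineSpan ℝ {B, C} : Set (EuclideanSpace ℝ (Fin 2))) *
           infDist M (affineSpan ℝ {C, A} : Set (EuclideanSpace ℝ (Fin 2))) *
           infDist M (affineSpan ℝ {A, B} : Set (EuclideanSpace ℝ (Fin 2)))) := by
  have hinj := hABC.injective
  have hAB : A ≠ B := fun h => by
    have := hinj (a₁ := 0) (a₂ := 1) (by simpa using h); simp at this
  have hAC : A ≠ C := fun h => by
    have := hinj (a₁ := 0) (a₂ := 2) (by simpa using h); simp at this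
  have hBC : B ≠ C := fun h => by
    have := hinj (a₁ := 1) (a₂ := 2) (by simpa using h); simp at this
  -- barycentric coordinates (nonnegative)
  have hM' : M ∈ convexHull ℝ ({A, B, C} : Set (EuclideanSpace ℝ (Fin 2))) :=
    interior_subset hM
  rw [show ({A, B, C} : Set (EuclideanSpace ℝ (Fin 2))) = insert A {B, C} from rfl,
    convexHull_insert ⟨B, by simp⟩, convexHull_pair] at hM'
  obtain ⟨A', hA', z, hz, hMseg⟩ := mem_convexJoin.1 hM'
  rw [Set.mem_singleton_iff] at hA'
  rw [hA'] at hMseg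
  obtain ⟨β, γ, hβ, hγ, hβγ, rfl⟩ := hz
  obtain ⟨s₁, t₁, hs₁, ht₁, hst, hMv⟩ := hMseg
  set u : EuclideanSpace ℝ (Fin 2) := B - A with hu
  set w : EuclideanSpace ℝ (Fin 2) := C - A with hw
  set b : ℝ := t₁ * β with hb'
  set c : ℝ := t₁ * γ with hc'
  set a : ℝ := 1 - b - c with ha'
  have hb : 0 ≤ b := mul_nonneg ht₁ hβ
  have hc : 0 ≤ c := mul_nonneg ht₁ hγ
  have ha : 0 ≤ a := by
    have : a = s₁ := by rw [ha', hb', hc']; nlinarith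
    rw [this]; exact hs₁
  have hv : M - A = b • u + c • w := by
    rw [← hMv, hu, hw, hb', hc']
    have h1 : s₁ = 1 - t₁ := by linarith
    have h2 : γ = 1 - β := by linarith
    rw [h1, h2]
    module

  -- basic quantities
  have hwu : w - u = C - B := by rw [hu, hw]; abel
  have hp : (0:ℝ) < ‖u‖ := by rw [hu, norm_pos_iff]; exact sub_ne_zero.2 hAB.symm
  have hq : (0:ℝ) < ‖w‖ := by rw [hw, norm_pos_iff]; exact sub_ne_zero.2 hAC.symm
  have hss : (0:ℝ) < ‖w - u‖ := by rw [hwu, norm_pos_iff]; exact sub_ne_zero.2 hBC.symm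
  have hs2 : ‖w - u‖ ^ 2 = ‖u‖ ^ 2 + ‖w‖ ^ 2 - 2 * (⟪u, w⟫ : ℝ) := by
    rw [norm_sub_sq_real, real_inner_comm]; ring
  have hG : (0:ℝ) ≤ (‖u‖ ^ 2 * ‖w‖ ^ 2 - (⟪u, w⟫ : ℝ) ^ 2) := by
    have habs := abs_real_inner_le_norm u w
    nlinarith [abs_nonneg ((⟪u, w⟫ : ℝ)), sq_abs ((⟪u, w⟫ : ℝ)), norm_nonneg u, norm_nonneg w]
  have hsqG : Real.sqrt (‖u‖ ^ 2 * ‖w‖ ^ 2 - (⟪u, w⟫ : ℝ) ^ 2) * Real.sqrt (‖u‖ ^ 2 * ‖w‖ ^ 2 - (⟪u, w⟫ : ℝ) ^ 2) = (‖u‖ ^ 2 * ‖w‖ ^ 2 - (⟪u, w⟫ : ℝ) ^ 2) := Real.mul_self_sqrt hG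
  -- combo forms
  have hMB : M - B = (b - 1) • u + c • w := by
    have h0 : M - B = (M - A) - u := by rw [hu]; abel
    rw [h0, hv]; module
  have hMB2 : M - B = a • (-u) + c • (w - u) := by rw [hMB, ha']; module
  have hMC : M - C = b • u + (c - 1) • w := by
    have h0 : M - C = (M - A) - w := by rw [hw]; abel
    rw [h0, hv]; module
  have hMC2 : M - C = a • (-w) + b • (u - w) := by rw [hMC, ha']; module
  -- the three distances to lines
  have hra : infDist M (affineSpan ℝ {B, C} : Set (EuclideanSpace ℝ (Fin 2))) * ‖w - u‖
      = a * Real.sqrt (‖u‖ ^ 2 * ‖w‖ ^ 2 - (⟪u, w⟫ : ℝ) ^ 2) := by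
    have gA := gram_combo u w (b - 1) c (-1) 1
    rw [show (-1 : ℝ) • u + (1 : ℝ) • w = w - u by module, ← hMB] at gA
    have h0 := infDist_line B C M hBC.symm
    rw [← hwu] at h0
    rw [gA, show ((b - 1) * 1 - c * (-1)) ^ 2 = a ^ 2 by rw [ha']; ring,
      Real.sqrt_mul (sq_nonneg a), Real.sqrt_sq ha] at h0
    exact h0
  have hrb : infDist M (affineSpan ℝ {C, A} : Set (EuclideanSpace ℝ (Fin 2))) * ‖w‖
      = b * Real.sqrt (‖u‖ ^ 2 * ‖w‖ ^ 2 - (⟪u, w⟫ : ℝ) ^ 2) := by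
    have gB := gram_combo u w b (c - 1) 0 (-1)
    rw [show (0 : ℝ) • u + (-1 : ℝ) • w = A - C by rw [hw]; module, ← hMC] at gB
    have h0 := infDist_line C A M hAC
    rw [gB, show (b * (-1) - (c - 1) * 0) ^ 2 = b ^ 2 by ring,
      Real.sqrt_mul (sq_nonneg b), Real.sqrt_sq hb,
      show ‖A - C‖ = ‖w‖ by rw [show A - C = -w by rw [hw]; abel, norm_neg]] at h0
    exact h0
  have hrc : infDist M (affineSpan ℝ {A, B} : Set (EuclideanSpace ℝ (Fin 2))) * ‖u‖
      = c * Real.sqrt (‖u‖ ^ 2 * ‖w‖ ^ 2 - (⟪u, w⟫ : ℝ) ^ 2) := by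
    have gC := gram_combo u w b c 1 0
    rw [show (1 : ℝ) • u + (0 : ℝ) • w = u by module, ← hv] at gC
    have h0 := infDist_line A B M hAB.symm
    rw [← hu] at h0
    rw [gC, show (b * 0 - c * 1) ^ 2 = c ^ 2 by ring,
      Real.sqrt_mul (sq_nonneg c), Real.sqrt_sq hc] at h0
    exact h0
  -- per-vertex inequalities
  have KA : 2 * b * c * (‖u‖ ^ 2 * ‖w‖ ^ 2 - (⟪u, w⟫ : ℝ) ^ 2) ≤ ‖M - A‖ ^ 2 * (‖u‖ * ‖w‖ - (⟪u, w⟫ : ℝ)) := by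
    have h0 := key_vertex u w hb hc
    rwa [← hv] at h0
  have KB : 2 * a * c * (‖u‖ ^ 2 * ‖w‖ ^ 2 - (⟪u, w⟫ : ℝ) ^ 2) ≤ ‖M - B‖ ^ 2 * (‖u‖ * ‖w - u‖ - (‖u‖ ^ 2 - (⟪u, w⟫ : ℝ))) := by
    have h0 := key_vertex (-u) (w - u) ha hc
    rw [← hMB2, norm_neg] at h0
    have hi : (⟪-u, w - u⟫ : ℝ) = ‖u‖ ^ 2 - (⟪u, w⟫ : ℝ) := by
      simp only [inner_neg_left, inner_sub_right, real_inner_self_eq_norm_sq]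
      ring
    rw [hi] at h0
    have hg : ‖u‖ ^ 2 * ‖w - u‖ ^ 2 - (‖u‖ ^ 2 - (⟪u, w⟫ : ℝ)) ^ 2 = (‖u‖ ^ 2 * ‖w‖ ^ 2 - (⟪u, w⟫ : ℝ) ^ 2) := by
      linear_combination ‖u‖ ^ 2 * hs2
    rwa [hg] at h0
  have KC : 2 * a * b * (‖u‖ ^ 2 * ‖w‖ ^ 2 - (⟪u, w⟫ : ℝ) ^ 2) ≤ ‖M - C‖ ^ 2 * (‖w‖ * ‖w - u‖ - (‖w‖ ^ 2 - (⟪u, w⟫ : ℝ))) := by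
    have h0 := key_vertex (-w) (u - w) ha hb
    rw [← hMC2, norm_neg, norm_sub_rev u w] at h0
    have hi : (⟪-w, u - w⟫ : ℝ) = ‖w‖ ^ 2 - (⟪u, w⟫ : ℝ) := by
      simp only [inner_neg_left, inner_sub_right, real_inner_self_eq_norm_sq]
      rw [real_inner_comm w u]; ring
    rw [hi] at h0
    have hg : ‖w‖ ^ 2 * ‖w - u‖ ^ 2 - (‖w‖ ^ 2 - (⟪u, w⟫ : ℝ)) ^ 2 = (‖u‖ ^ 2 * ‖w‖ ^ 2 - (⟪u, w⟫ : ℝ) ^ 2) := by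
      linear_combination ‖w‖ ^ 2 * hs2
    rwa [hg] at h0
  -- triangle inequalities
  have hX : (0:ℝ) ≤ (‖w‖ + ‖w - u‖ - ‖u‖) := by
    have h0 : u = w - (w - u) := by abel
    have := norm_sub_le w (w - u)
    rw [← h0] at this; linarith
  have hY : (0:ℝ) ≤ (‖u‖ + ‖w - u‖ - ‖w‖) := by
    have h0 : w = u + (w - u) := by abel
    have := norm_add_le u (w - u)
    rw [← h0] at this; linarith
  have hZ : (0:ℝ) ≤ (‖u‖ + ‖w‖ - ‖w - u‖) := by
    have := norm_sub_le w u
    linarith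
  have hXYZ : (‖w‖ + ‖w - u‖ - ‖u‖) * (‖u‖ + ‖w - u‖ - ‖w‖) * (‖u‖ + ‖w‖ - ‖w - u‖) ≤ ‖u‖ * ‖w‖ * ‖w - u‖ := by
    nlinarith [hX, hY, hZ, mul_nonneg hX hY, mul_nonneg hY hZ, mul_nonneg hX hZ,
      sq_nonneg (‖u‖ - ‖w‖), sq_nonneg (‖w‖ - ‖w - u‖), sq_nonneg (‖w - u‖ - ‖u‖), hp, hq, hss]
  -- half-angle factorizations
  have m1 : ‖u‖ * ‖w‖ - (⟪u, w⟫ : ℝ) = (‖w‖ + ‖w - u‖ - ‖u‖) * (‖u‖ + ‖w - u‖ - ‖w‖) / 2 := by linear_combination (-1/2 : ℝ) * hs2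
  have m2 : ‖u‖ * ‖w - u‖ - (‖u‖ ^ 2 - (⟪u, w⟫ : ℝ)) = (‖u‖ + ‖w‖ - ‖w - u‖) * (‖w‖ + ‖w - u‖ - ‖u‖) / 2 := by
    linear_combination (1/2 : ℝ) * hs2
  have m3 : ‖w‖ * ‖w - u‖ - (‖w‖ ^ 2 - (⟪u, w⟫ : ℝ)) = (‖u‖ + ‖w‖ - ‖w - u‖) * (‖u‖ + ‖w - u‖ - ‖w‖) / 2 := by
    linear_combination (1/2 : ℝ) * hs2
  -- multiply the three vertex inequalities
  have Q1 : (0:ℝ) ≤ ‖M - A‖ ^ 2 * (‖u‖ * ‖w‖ - (⟪u, w⟫ : ℝ)) := by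
    rw [m1]; positivity
  have Q2 : (0:ℝ) ≤ ‖M - B‖ ^ 2 * (‖u‖ * ‖w - u‖ - (‖u‖ ^ 2 - (⟪u, w⟫ : ℝ))) := by
    rw [m2]; positivity
  have P2 : (0:ℝ) ≤ 2 * a * c * (‖u‖ ^ 2 * ‖w‖ ^ 2 - (⟪u, w⟫ : ℝ) ^ 2) := by positivity
  have P3 : (0:ℝ) ≤ 2 * a * b * (‖u‖ ^ 2 * ‖w‖ ^ 2 - (⟪u, w⟫ : ℝ) ^ 2) := by positivity
  have step : (2 * b * c * (‖u‖ ^ 2 * ‖w‖ ^ 2 - (⟪u, w⟫ : ℝ) ^ 2)) * (2 * a * c * (‖u‖ ^ 2 * ‖w‖ ^ 2 - (⟪u, w⟫ : ℝ) ^ 2)) * (2 * a * b * (‖u‖ ^ 2 * ‖w‖ ^ 2 - (⟪u, w⟫ : ℝ) ^ 2)) ≤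
      (‖M - A‖ ^ 2 * (‖u‖ * ‖w‖ - (⟪u, w⟫ : ℝ))) * (‖M - B‖ ^ 2 * (‖u‖ * ‖w - u‖ - (‖u‖ ^ 2 - (⟪u, w⟫ : ℝ)))) *
        (‖M - C‖ ^ 2 * (‖w‖ * ‖w - u‖ - (‖w‖ ^ 2 - (⟪u, w⟫ : ℝ)))) := by
    have s1 := mul_le_mul KA KB P2 Q1
    exact mul_le_mul s1 KC P3 (mul_nonneg Q1 Q2)
  have hXYZsq : ((‖w‖ + ‖w - u‖ - ‖u‖) * (‖u‖ + ‖w - u‖ - ‖w‖) * (‖u‖ + ‖w‖ - ‖w - u‖)) ^ 2 ≤ (‖u‖ * ‖w‖ * ‖w - u‖) ^ 2 := by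
    have h0 : (0:ℝ) ≤ (‖w‖ + ‖w - u‖ - ‖u‖) * (‖u‖ + ‖w - u‖ - ‖w‖) * (‖u‖ + ‖w‖ - ‖w - u‖) := mul_nonneg (mul_nonneg hX hY) hZ
    exact pow_le_pow_left₀ h0 hXYZ 2
  have master_sq : 64 * (a * b * c) ^ 2 * (‖u‖ ^ 2 * ‖w‖ ^ 2 - (⟪u, w⟫ : ℝ) ^ 2) ^ 3 ≤
      ((‖M - A‖ * ‖M - B‖ * ‖M - C‖) * (‖u‖ * ‖w‖ * ‖w - u‖)) ^ 2 := by
    have hR2 : (0:ℝ) ≤ (‖M - A‖ * ‖M - B‖ * ‖M - C‖) ^ 2 := sq_nonneg _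
    calc 64 * (a * b * c) ^ 2 * (‖u‖ ^ 2 * ‖w‖ ^ 2 - (⟪u, w⟫ : ℝ) ^ 2) ^ 3
        = 8 * ((2 * b * c * (‖u‖ ^ 2 * ‖w‖ ^ 2 - (⟪u, w⟫ : ℝ) ^ 2)) * (2 * a * c * (‖u‖ ^ 2 * ‖w‖ ^ 2 - (⟪u, w⟫ : ℝ) ^ 2)) * (2 * a * b * (‖u‖ ^ 2 * ‖w‖ ^ 2 - (⟪u, w⟫ : ℝ) ^ 2))) := by ring
      _ ≤ 8 * ((‖M - A‖ ^ 2 * (‖u‖ * ‖w‖ - (⟪u, w⟫ : ℝ))) * (‖M - B‖ ^ 2 * (‖u‖ * ‖w - u‖ - (‖u‖ ^ 2 - (⟪u, w⟫ : ℝ)))) *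
            (‖M - C‖ ^ 2 * (‖w‖ * ‖w - u‖ - (‖w‖ ^ 2 - (⟪u, w⟫ : ℝ))))) := by linarith [step]
      _ = (‖M - A‖ * ‖M - B‖ * ‖M - C‖) ^ 2 * ((‖w‖ + ‖w - u‖ - ‖u‖) * (‖u‖ + ‖w - u‖ - ‖w‖) * (‖u‖ + ‖w‖ - ‖w - u‖)) ^ 2 := by
            rw [m1, m2, m3]; ring
      _ ≤ (‖M - A‖ * ‖M - B‖ * ‖M - C‖) ^ 2 * (‖u‖ * ‖w‖ * ‖w - u‖) ^ 2 :=
            mul_le_mul_of_nonneg_left hXYZsq hR2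
      _ = ((‖M - A‖ * ‖M - B‖ * ‖M - C‖) * (‖u‖ * ‖w‖ * ‖w - u‖)) ^ 2 := by ring
  have hLnn : (0:ℝ) ≤ 8 * (a * b * c) * (‖u‖ ^ 2 * ‖w‖ ^ 2 - (⟪u, w⟫ : ℝ) ^ 2) * Real.sqrt (‖u‖ ^ 2 * ‖w‖ ^ 2 - (⟪u, w⟫ : ℝ) ^ 2) :=
    mul_nonneg (mul_nonneg (by positivity) hG) (Real.sqrt_nonneg _)
  have hRnn : (0:ℝ) ≤ (‖M - A‖ * ‖M - B‖ * ‖M - C‖) * (‖u‖ * ‖w‖ * ‖w - u‖) := by positivity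
  have master : 8 * (a * b * c) * (‖u‖ ^ 2 * ‖w‖ ^ 2 - (⟪u, w⟫ : ℝ) ^ 2) * Real.sqrt (‖u‖ ^ 2 * ‖w‖ ^ 2 - (⟪u, w⟫ : ℝ) ^ 2) ≤
      (‖M - A‖ * ‖M - B‖ * ‖M - C‖) * (‖u‖ * ‖w‖ * ‖w - u‖) := by
    have hs1 : (8 * (a * b * c) * (‖u‖ ^ 2 * ‖w‖ ^ 2 - (⟪u, w⟫ : ℝ) ^ 2) * Real.sqrt (‖u‖ ^ 2 * ‖w‖ ^ 2 - (⟪u, w⟫ : ℝ) ^ 2)) ^ 2 =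
        64 * (a * b * c) ^ 2 * (‖u‖ ^ 2 * ‖w‖ ^ 2 - (⟪u, w⟫ : ℝ) ^ 2) ^ 3 := by
      calc (8 * (a * b * c) * (‖u‖ ^ 2 * ‖w‖ ^ 2 - (⟪u, w⟫ : ℝ) ^ 2) * Real.sqrt (‖u‖ ^ 2 * ‖w‖ ^ 2 - (⟪u, w⟫ : ℝ) ^ 2)) ^ 2
          = 64 * (a * b * c) ^ 2 * (‖u‖ ^ 2 * ‖w‖ ^ 2 - (⟪u, w⟫ : ℝ) ^ 2) ^ 2 * (Real.sqrt (‖u‖ ^ 2 * ‖w‖ ^ 2 - (⟪u, w⟫ : ℝ) ^ 2) * Real.sqrt (‖u‖ ^ 2 * ‖w‖ ^ 2 - (⟪u, w⟫ : ℝ) ^ 2)) := by ring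
        _ = 64 * (a * b * c) ^ 2 * (‖u‖ ^ 2 * ‖w‖ ^ 2 - (⟪u, w⟫ : ℝ) ^ 2) ^ 3 := by rw [hsqG]; ring
    have h0 := Real.sqrt_le_sqrt (by rw [hs1]; exact master_sq :
      (8 * (a * b * c) * (‖u‖ ^ 2 * ‖w‖ ^ 2 - (⟪u, w⟫ : ℝ) ^ 2) * Real.sqrt (‖u‖ ^ 2 * ‖w‖ ^ 2 - (⟪u, w⟫ : ℝ) ^ 2)) ^ 2 ≤
        ((‖M - A‖ * ‖M - B‖ * ‖M - C‖) * (‖u‖ * ‖w‖ * ‖w - u‖)) ^ 2)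
    rwa [Real.sqrt_sq hLnn, Real.sqrt_sq hRnn] at h0
  -- finish
  have hra' : infDist M (affineSpan ℝ {B, C} : Set (EuclideanSpace ℝ (Fin 2)))
      = a * Real.sqrt (‖u‖ ^ 2 * ‖w‖ ^ 2 - (⟪u, w⟫ : ℝ) ^ 2) / ‖w - u‖ := by rw [eq_div_iff hss.ne']; exact hra
  have hrb' : infDist M (affineSpan ℝ {C, A} : Set (EuclideanSpace ℝ (Fin 2)))
      = b * Real.sqrt (‖u‖ ^ 2 * ‖w‖ ^ 2 - (⟪u, w⟫ : ℝ) ^ 2) / ‖w‖ := by rw [eq_div_iff hq.ne']; exact hrb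
  have hrc' : infDist M (affineSpan ℝ {A, B} : Set (EuclideanSpace ℝ (Fin 2)))
      = c * Real.sqrt (‖u‖ ^ 2 * ‖w‖ ^ 2 - (⟪u, w⟫ : ℝ) ^ 2) / ‖u‖ := by rw [eq_div_iff hp.ne']; exact hrc
  rw [ge_iff_le, hra', hrb', hrc', div_mul_div_comm, div_mul_div_comm, ← mul_div_assoc,
    div_le_iff₀ (by positivity)]
  calc 8 * (a * Real.sqrt (‖u‖ ^ 2 * ‖w‖ ^ 2 - (⟪u, w⟫ : ℝ) ^ 2) * (b * Real.sqrt (‖u‖ ^ 2 * ‖w‖ ^ 2 - (⟪u, w⟫ : ℝ) ^ 2)) * (c * Real.sqrt (‖u‖ ^ 2 * ‖w‖ ^ 2 - (⟪u, w⟫ : ℝ) ^ 2)))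
      = 8 * (a * b * c) * (‖u‖ ^ 2 * ‖w‖ ^ 2 - (⟪u, w⟫ : ℝ) ^ 2) * Real.sqrt (‖u‖ ^ 2 * ‖w‖ ^ 2 - (⟪u, w⟫ : ℝ) ^ 2) := by
        linear_combination (8 * a * b * c * Real.sqrt (‖u‖ ^ 2 * ‖w‖ ^ 2 - (⟪u, w⟫ : ℝ) ^ 2)) * hsqG
    _ ≤ (‖M - A‖ * ‖M - B‖ * ‖M - C‖) * (‖u‖ * ‖w‖ * ‖w - u‖) := master
    _ = dist M A * dist M B * dist M C * (‖w - u‖ * ‖w‖ * ‖u‖) := by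
        rw [dist_eq_norm, dist_eq_norm, dist_eq_norm]; ring
end

section
/- Let p < q and r ≠ 0 be real numbers. For all real k with pk + r ≥ 0 and -qk - r ≥ 0, or with pk + r ≤ 0 and -qk - r ≤ 0, the inequality (q-p)·√(r²+p²)·√(r²+q²)·√(1+k²) ≥ (r²+p²)·|−qk−r| + (r²+q²)·|pk+r| holds. -/
theorem stmt_5 (p q r k : ℝ) (hpq : p < q) (hr : r ≠ 0)
    (hk : (p * k + r ≥ 0 ∧ -(q * k) - r ≥ 0) ∨ (p * k + r ≤ 0 ∧ -(q * k) - r ≤ 0)) :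
    (q - p) * Real.sqrt (r ^ 2 + p ^ 2) * Real.sqrt (r ^ 2 + q ^ 2) *
        Real.sqrt (1 + k ^ 2) ≥
      (r ^ 2 + p ^ 2) * |-(q * k) - r| + (r ^ 2 + q ^ 2) * |p * k + r| := by
  have hr2 : 0 < r ^ 2 := by positivity
  have hA : (0:ℝ) < r ^ 2 + p ^ 2 := by positivity
  have hB : (0:ℝ) < r ^ 2 + q ^ 2 := by positivity
  have hc : (0:ℝ) < q - p := by linarith
  set u : ℝ := -(q * k) - r with hu
  set v : ℝ := p * k + r with hv
  have hL : (q - p) * Real.sqrt (r ^ 2 + p ^ 2) * Real.sqrt (r ^ 2 + q ^ 2) *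
      Real.sqrt (1 + k ^ 2)
      = Real.sqrt ((q - p) ^ 2 * ((r ^ 2 + p ^ 2) * ((r ^ 2 + q ^ 2) * (1 + k ^ 2)))) := by
    rw [Real.sqrt_mul (by positivity), Real.sqrt_mul (by positivity),
      Real.sqrt_mul (by positivity), Real.sqrt_sq hc.le]
    ring
  rw [ge_iff_le, hL]
  rw [Real.le_sqrt (by positivity)]
  have habs : ((r ^ 2 + p ^ 2) * |u| + (r ^ 2 + q ^ 2) * |v|) ^ 2
      = ((r ^ 2 + p ^ 2) * u + (r ^ 2 + q ^ 2) * v) ^ 2 := by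
    rcases hk with ⟨h1, h2⟩ | ⟨h1, h2⟩
    · rw [abs_of_nonneg h2, abs_of_nonneg h1]
    · rw [abs_of_nonpos h2, abs_of_nonpos h1]; ring
  rw [habs, hu, hv]
  nlinarith [sq_nonneg (p * q * ((-(q * k) - r) ^ 2 + (p * k + r) ^ 2)
      + (p ^ 2 + q ^ 2) * ((-(q * k) - r) * (p * k + r))
      + p * q * (q - p) ^ 2), mul_pos hc hc, sq_nonneg (q - p),
    mul_pos (mul_pos hc hc) hr2]
  positivity
end

section
/- Let p < q and r ≠ 0. If pk + r ≥ 0 and -qk - r ≥ 0, then equality (q-p)·√(r²+p²)·√(r²+q²)·√(1+k²) = (r²+p²)·(−qk−r) + (r²+q²)·(pk+r) holds if and only if r(p+q)·k = pq − r² (in particular, if p+q ≠ 0, iff k = (pq−r²)/(r(p+q))). -/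
theorem stmt_6 (p q r k : ℝ) (hpq : p < q) (hr : r ≠ 0)
    (h1 : p * k + r ≥ 0) (h2 : -(q * k) - r ≥ 0) :
    ((q - p) * Real.sqrt (r ^ 2 + p ^ 2) * Real.sqrt (r ^ 2 + q ^ 2) *
        Real.sqrt (1 + k ^ 2) =
      (r ^ 2 + p ^ 2) * (-(q * k) - r) + (r ^ 2 + q ^ 2) * (p * k + r)) ↔
    r * (p + q) * k = p * q - r ^ 2 := by
  have hpos1 : (0:ℝ) < r ^ 2 + p ^ 2 := by positivity
  have hpos2 : (0:ℝ) < r ^ 2 + q ^ 2 := by positivity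
  have hqp : (0:ℝ) < q - p := by linarith
  set A : ℝ := k * (p * q - r ^ 2) + r * (p + q) with hAdef
  set C : ℝ := r * (p + q) * k - (p * q - r ^ 2) with hCdef
  have hA : 0 ≤ A := by
    nlinarith [mul_nonneg hpos1.le h2, mul_nonneg hpos2.le h1]
  have hRHS : (r ^ 2 + p ^ 2) * (-(q * k) - r) + (r ^ 2 + q ^ 2) * (p * k + r)
      = (q - p) * A := by rw [hAdef]; ring
  have hprod : (r ^ 2 + p ^ 2) * ((r ^ 2 + q ^ 2) * (1 + k ^ 2)) = A ^ 2 + C ^ 2 := by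
    rw [hAdef, hCdef]; ring
  have hs : (q - p) * Real.sqrt (r ^ 2 + p ^ 2) * Real.sqrt (r ^ 2 + q ^ 2) *
      Real.sqrt (1 + k ^ 2) = (q - p) * Real.sqrt (A ^ 2 + C ^ 2) := by
    rw [mul_assoc, mul_assoc, ← Real.sqrt_mul hpos2.le, ← Real.sqrt_mul hpos1.le, hprod]
  rw [hs, hRHS]
  constructor
  · intro h
    have h' : Real.sqrt (A ^ 2 + C ^ 2) = A := mul_left_cancel₀ hqp.ne' h
    have h2' : A ^ 2 + C ^ 2 = A ^ 2 := by
      have := Real.sq_sqrt (by positivity : (0:ℝ) ≤ A ^ 2 + C ^ 2)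
      rw [h'] at this
      linarith [this]
    have hC : C = 0 := by nlinarith [sq_nonneg C]
    rw [hCdef] at hC; linarith
  · intro h
    have hC : C = 0 := by rw [hCdef]; linarith
    rw [hC]
    have : A ^ 2 + 0 ^ 2 = A ^ 2 := by ring
    rw [this, Real.sqrt_sq hA]
end

section
/- Let p < q with pq ≠ 0 and r ≠ 0 satisfy r² + pq = 0 (angle BAC is right). Then for all real k with (pk+r)(−qk−r) ≤ 0 we have (q−p)·√(r²+p²)·√(r²+q²)·√(1+k²) ≥ (r²+p²)·|−qk−r| + (r²+q²)·|pk+r|, with equality if and only if k = 0. -/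
theorem stmt_10 (p q r : ℝ) (hpq : p < q) (hpq0 : p * q ≠ 0) (hr : r ≠ 0)
    (hright : r ^ 2 + p * q = 0) (k : ℝ)
    (hk : (p * k + r) * (-(q * k) - r) ≤ 0) :
    ((q - p) * Real.sqrt (r ^ 2 + p ^ 2) * Real.sqrt (r ^ 2 + q ^ 2) *
        Real.sqrt (1 + k ^ 2) ≥
      (r ^ 2 + p ^ 2) * |-(q * k) - r| + (r ^ 2 + q ^ 2) * |p * k + r|) ∧
    ((q - p) * Real.sqrt (r ^ 2 + p ^ 2) * Real.sqrt (r ^ 2 + q ^ 2) *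
        Real.sqrt (1 + k ^ 2) =
      (r ^ 2 + p ^ 2) * |-(q * k) - r| + (r ^ 2 + q ^ 2) * |p * k + r| ↔ k = 0) := by
  have hr2 : 0 < r ^ 2 := by positivity
  have hpqneg : p * q < 0 := by nlinarith
  have hp : p < 0 := by nlinarith
  have hq : 0 < q := by nlinarith
  have hqp : 0 < q - p := by linarith
  have hsq : Real.sqrt (r ^ 2 + p ^ 2) * Real.sqrt (r ^ 2 + q ^ 2) = (q - p) * |r| := by
    rw [← Real.sqrt_mul (by positivity)]
    rw [show (r ^ 2 + p ^ 2) * (r ^ 2 + q ^ 2) = ((q - p) * |r|) ^ 2 by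
      rw [mul_pow, sq_abs]; linear_combination (r ^ 2 + p * q) * hright]
    exact Real.sqrt_sq (by positivity)
  have hsame : 0 ≤ (p * k + r) * (q * k + r) := by nlinarith
  have hRHS : (r ^ 2 + p ^ 2) * |-(q * k) - r| + (r ^ 2 + q ^ 2) * |p * k + r|
      = (q - p) ^ 2 * |r| := by
    rcases le_or_gt 0 (p * k + r) with h1 | h1
    · rcases le_or_gt 0 (q * k + r) with h2 | h2
      · have hr0 : 0 ≤ r := by
          nlinarith [mul_nonneg (neg_nonneg.2 hp.le) h2, mul_nonneg hq.le h1]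
        rw [abs_of_nonpos (by linarith : -(q * k) - r ≤ 0), abs_of_nonneg h1,
          abs_of_nonneg hr0]
        linear_combination (k * (p + q) + 2 * r) * hright
      · have heq : p * k + r = 0 := le_antisymm (by nlinarith) h1
        have h3 : p * q * k = -(q * r) := by linear_combination q * heq
        have hrneg : r < 0 := by
          nlinarith [h3, mul_pos (neg_pos.2 hp) (neg_pos.2 h2), hqp]
        rw [heq, abs_zero, abs_of_nonneg (by linarith : (0:ℝ) ≤ -(q * k) - r),
          abs_of_neg hrneg]
        linear_combination (-(k * (p + q) + 2 * r)) * hright + (r ^ 2 + q ^ 2) * heq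
    · have h2 : q * k + r ≤ 0 := by nlinarith
      have hr0 : r ≤ 0 := by
        nlinarith [mul_nonpos_of_nonneg_of_nonpos (neg_nonneg.2 hp.le) h2,
          mul_nonpos_of_nonneg_of_nonpos hq.le h1.le]
      rw [abs_of_nonneg (by linarith : (0:ℝ) ≤ -(q * k) - r), abs_of_nonpos h1.le,
        abs_of_nonpos hr0]
      linear_combination (-(k * (p + q) + 2 * r)) * hright
  have hL : (q - p) * Real.sqrt (r ^ 2 + p ^ 2) * Real.sqrt (r ^ 2 + q ^ 2) *
      Real.sqrt (1 + k ^ 2) = (q - p) ^ 2 * |r| * Real.sqrt (1 + k ^ 2) := by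
    rw [show (q - p) * Real.sqrt (r ^ 2 + p ^ 2) * Real.sqrt (r ^ 2 + q ^ 2) *
        Real.sqrt (1 + k ^ 2) = (q - p) * (Real.sqrt (r ^ 2 + p ^ 2) *
        Real.sqrt (r ^ 2 + q ^ 2)) * Real.sqrt (1 + k ^ 2) by ring, hsq]
    ring
  have hpos : 0 < (q - p) ^ 2 * |r| := mul_pos (by positivity) (abs_pos.2 hr)
  have h1k : 1 ≤ Real.sqrt (1 + k ^ 2) := by
    nlinarith [Real.sq_sqrt (show (0:ℝ) ≤ 1 + k ^ 2 by positivity),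
      Real.sqrt_nonneg (1 + k ^ 2)]
  constructor
  · rw [ge_iff_le, hRHS, hL]
    nlinarith [h1k, hpos]
  · rw [hRHS, hL]
    constructor
    · intro h
      have hs : Real.sqrt (1 + k ^ 2) = 1 :=
        mul_left_cancel₀ (ne_of_gt hpos) (h.trans (mul_one _).symm)
      have h1 : 1 + k ^ 2 = 1 := Real.sqrt_eq_one.mp hs
      nlinarith
    · intro h; subst h; norm_num
end

section
/- Let triangle ABC have an obtuse or right angle at A. Then for every point M in the region bounded by lines AB and AC lying outside the double angle at A (i.e., in the supplementary corner regions), the strict inequality a·R_A > c·r_b + b·r_c holds when the angle at A is obtuse. -/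
theorem stmt_17 (p q r : ℝ) (hpq : p < q) (hr : r ≠ 0)
    (hobtuse : r ^ 2 + p * q < 0) (k x : ℝ) (hx : x ≠ 0)
    (hk : (p * k + r) * (-(q * k) - r) < 0) :
    (q - p) * Real.sqrt (r ^ 2 + p ^ 2) * Real.sqrt (r ^ 2 + q ^ 2) *
        Real.sqrt (x ^ 2 + (k * x + r - r) ^ 2) >
      (r ^ 2 + p ^ 2) * |-(q * (k * x + r)) - r * x + q * r| +
      (r ^ 2 + q ^ 2) * |p * (k * x + r) + r * x - p * r| := by
  have hr2 : 0 < r ^ 2 := by positivity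
  have hc2 : (0:ℝ) < r ^ 2 + p ^ 2 := by positivity
  have hb2 : (0:ℝ) < r ^ 2 + q ^ 2 := by positivity
  have h1k : (0:ℝ) < 1 + k ^ 2 := by positivity
  have hst : 0 < (p * k + r) * (q * k + r) := by nlinarith [hk]
  have hxpos : 0 < |x| := abs_pos.mpr hx
  -- rewrite the absolute values
  have habs1 : |-(q * (k * x + r)) - r * x + q * r| = |x| * |q * k + r| := by
    rw [← abs_mul, ← abs_neg]; congr 1; ring
  have habs2 : |p * (k * x + r) + r * x - p * r| = |x| * |p * k + r| := by
    rw [← abs_mul]; congr 1; ring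
  have hsqx : Real.sqrt (x ^ 2 + (k * x + r - r) ^ 2) = |x| * Real.sqrt (1 + k ^ 2) := by
    rw [show x ^ 2 + (k * x + r - r) ^ 2 = x ^ 2 * (1 + k ^ 2) by ring,
      Real.sqrt_mul (sq_nonneg x), Real.sqrt_sq_eq_abs]
  rw [habs1, habs2, hsqx]
  -- main inequality without x
  have key : (r ^ 2 + p ^ 2) * |q * k + r| + (r ^ 2 + q ^ 2) * |p * k + r| <
      (q - p) * Real.sqrt (r ^ 2 + p ^ 2) * Real.sqrt (r ^ 2 + q ^ 2) *
        Real.sqrt (1 + k ^ 2) := by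
    have hLnn : 0 ≤ (q - p) * Real.sqrt (r ^ 2 + p ^ 2) * Real.sqrt (r ^ 2 + q ^ 2) *
        Real.sqrt (1 + k ^ 2) := by
      have := Real.sqrt_nonneg (r ^ 2 + p ^ 2)
      have := Real.sqrt_nonneg (r ^ 2 + q ^ 2)
      have := Real.sqrt_nonneg (1 + k ^ 2)
      have : (0:ℝ) ≤ q - p := by linarith
      positivity
    refine lt_of_pow_lt_pow_left₀ 2 hLnn ?_
    have e1 : Real.sqrt (r ^ 2 + p ^ 2) ^ 2 = r ^ 2 + p ^ 2 := Real.sq_sqrt hc2.le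
    have e2 : Real.sqrt (r ^ 2 + q ^ 2) ^ 2 = r ^ 2 + q ^ 2 := Real.sq_sqrt hb2.le
    have e3 : Real.sqrt (1 + k ^ 2) ^ 2 = 1 + k ^ 2 := Real.sq_sqrt h1k.le
    have hts : |q * k + r| * |p * k + r| = (q * k + r) * (p * k + r) := by
      rw [← abs_mul]; exact abs_of_pos (by nlinarith)
    have eL : ((q - p) * Real.sqrt (r ^ 2 + p ^ 2) * Real.sqrt (r ^ 2 + q ^ 2) *
        Real.sqrt (1 + k ^ 2)) ^ 2 =
        (q - p) ^ 2 * (r ^ 2 + p ^ 2) * (r ^ 2 + q ^ 2) * (1 + k ^ 2) := by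
      rw [mul_pow, mul_pow, mul_pow, e1, e2, e3]
    have eR : ((r ^ 2 + p ^ 2) * |q * k + r| + (r ^ 2 + q ^ 2) * |p * k + r|) ^ 2 =
        ((r ^ 2 + p ^ 2) * (q * k + r) + (r ^ 2 + q ^ 2) * (p * k + r)) ^ 2 := by
      have ht2 : |q * k + r| ^ 2 = (q * k + r) ^ 2 := sq_abs _
      have hs2 : |p * k + r| ^ 2 = (p * k + r) ^ 2 := sq_abs _
      linear_combination (r ^ 2 + p ^ 2) ^ 2 * ht2 + (r ^ 2 + q ^ 2) ^ 2 * hs2 +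
        2 * (r ^ 2 + p ^ 2) * (r ^ 2 + q ^ 2) * hts
    rw [eL, eR]
    -- polynomial inequality via certificate
    have cert : ((q - p) ^ 2 * (r ^ 2 + p ^ 2) * (r ^ 2 + q ^ 2) * (1 + k ^ 2) -
        ((r ^ 2 + p ^ 2) * (q * k + r) + (r ^ 2 + q ^ 2) * (p * k + r)) ^ 2) *
          (1 + k ^ 2) ^ 2 =
        ((r * k - q) * ((1 + k ^ 2) * (r ^ 2 + p ^ 2)) +
          (r * k - p) * ((1 + k ^ 2) * (r ^ 2 + q ^ 2))) ^ 2 +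
        4 * (-(r ^ 2 + p * q)) * (1 + k ^ 2) * ((1 + k ^ 2) * (r ^ 2 + p ^ 2)) *
          ((1 + k ^ 2) * (r ^ 2 + q ^ 2)) := by ring
    have hR : 0 < ((r * k - q) * ((1 + k ^ 2) * (r ^ 2 + p ^ 2)) +
          (r * k - p) * ((1 + k ^ 2) * (r ^ 2 + q ^ 2))) ^ 2 +
        4 * (-(r ^ 2 + p * q)) * (1 + k ^ 2) * ((1 + k ^ 2) * (r ^ 2 + p ^ 2)) *
          ((1 + k ^ 2) * (r ^ 2 + q ^ 2)) := by
      have hneg : 0 < -(r ^ 2 + p * q) := by linarith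
      positivity
    have h2 : (0:ℝ) < (1 + k ^ 2) ^ 2 := by positivity
    rw [← cert] at hR
    rcases mul_pos_iff.mp hR with ⟨h3, _⟩ | ⟨_, h4⟩
    · linarith
    · linarith
  calc (r ^ 2 + p ^ 2) * (|x| * |q * k + r|) + (r ^ 2 + q ^ 2) * (|x| * |p * k + r|)
      = |x| * ((r ^ 2 + p ^ 2) * |q * k + r| + (r ^ 2 + q ^ 2) * |p * k + r|) := by ring
    _ < |x| * ((q - p) * Real.sqrt (r ^ 2 + p ^ 2) * Real.sqrt (r ^ 2 + q ^ 2) *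
        Real.sqrt (1 + k ^ 2)) := by exact mul_lt_mul_of_pos_left key hxpos
    _ = (q - p) * Real.sqrt (r ^ 2 + p ^ 2) * Real.sqrt (r ^ 2 + q ^ 2) *
        (|x| * Real.sqrt (1 + k ^ 2)) := by ring
end

section
/- For a triangle with vertices A(0,r), B(p,0), C(q,0), p < q, r ≠ 0, and a point M(x,y) in the closed triangle, the inequality |q−p|·√(r²+p²)·√(r²+q²)·√(x²+(y−r)²) ≥ (r²+p²)·|−qy−rx+qr| + (r²+q²)·|py+rx−pr| holds. -/
theorem stmt_18 (p q r x y : ℝ) (hpq : p < q) (hr : r ≠ 0)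
    (hM : (x, y) ∈ convexHull ℝ ({(0, r), (p, 0), (q, 0)} : Set (ℝ × ℝ))) :
    |q - p| * Real.sqrt (r ^ 2 + p ^ 2) * Real.sqrt (r ^ 2 + q ^ 2) *
        Real.sqrt (x ^ 2 + (y - r) ^ 2) ≥
      (r ^ 2 + p ^ 2) * |-(q * y) - r * x + q * r| +
      (r ^ 2 + q ^ 2) * |p * y + r * x - p * r| := by
  have hqp : (0:ℝ) < q - p := by linarith
  have hr2 : (0:ℝ) < r ^ 2 := by positivity
  -- halfspace 1 : r^2 * x + q*r*y ≤ q*r^2 on the hull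
  have hlin1 : IsLinearMap ℝ (fun z : ℝ × ℝ => r ^ 2 * z.1 + q * r * z.2) := by
    constructor
    · intro a b; simp only [Prod.fst_add, Prod.snd_add]; ring
    · intro c a; simp only [Prod.smul_fst, Prod.smul_snd, smul_eq_mul]; ring
  have hlin2 : IsLinearMap ℝ (fun z : ℝ × ℝ => r ^ 2 * z.1 + p * r * z.2) := by
    constructor
    · intro a b; simp only [Prod.fst_add, Prod.snd_add]; ring
    · intro c a; simp only [Prod.smul_fst, Prod.smul_snd, smul_eq_mul]; ring
  have h1 : convexHull ℝ ({(0, r), (p, 0), (q, 0)} : Set (ℝ × ℝ)) ⊆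
      {z : ℝ × ℝ | r ^ 2 * z.1 + q * r * z.2 ≤ q * r ^ 2} := by
    apply convexHull_min ?_ (convex_halfSpace_le hlin1 (q * r ^ 2))
    intro z hz
    rcases hz with hz | hz | hz <;> subst hz <;> simp only [Set.mem_setOf_eq] <;> nlinarith
  have h2 : convexHull ℝ ({(0, r), (p, 0), (q, 0)} : Set (ℝ × ℝ)) ⊆
      {z : ℝ × ℝ | p * r ^ 2 ≤ r ^ 2 * z.1 + p * r * z.2} := by
    apply convexHull_min ?_ (convex_halfSpace_ge hlin2 (p * r ^ 2))
    intro z hz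
    rcases hz with hz | hz | hz <;> subst hz <;> simp only [Set.mem_setOf_eq] <;> nlinarith
  have hA : 0 ≤ r * (-(q * y) - r * x + q * r) := by
    have := h1 hM; simp only [Set.mem_setOf_eq] at this; nlinarith
  have hB : 0 ≤ r * (p * y + r * x - p * r) := by
    have := h2 hM; simp only [Set.mem_setOf_eq] at this; nlinarith
  -- Cauchy–Schwarz step
  set T : ℝ := r * (p + q) * x + (r ^ 2 - p * q) * (r - y) with hT
  have hT2 : T ^ 2 ≤ (r ^ 2 + p ^ 2) * ((r ^ 2 + q ^ 2) * (x ^ 2 + (y - r) ^ 2)) := by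
    have h := sq_nonneg (r * (p + q) * (r - y) - (r ^ 2 - p * q) * x)
    have lag : T ^ 2 + (r * (p + q) * (r - y) - (r ^ 2 - p * q) * x) ^ 2 =
        (r ^ 2 + p ^ 2) * ((r ^ 2 + q ^ 2) * (x ^ 2 + (y - r) ^ 2)) := by
      rw [hT]; ring
    linarith
  have key : (r * T) ^ 2 ≤ r ^ 2 * ((r ^ 2 + p ^ 2) * ((r ^ 2 + q ^ 2) *
      (x ^ 2 + (y - r) ^ 2))) := by
    calc (r * T) ^ 2 = r ^ 2 * T ^ 2 := by ring
      _ ≤ _ := mul_le_mul_of_nonneg_left hT2 (sq_nonneg r)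
  have hrT : r * T ≤ Real.sqrt (r ^ 2) * (Real.sqrt (r ^ 2 + p ^ 2) *
      (Real.sqrt (r ^ 2 + q ^ 2) * Real.sqrt (x ^ 2 + (y - r) ^ 2))) := by
    have h1' : r * T ≤ Real.sqrt ((r * T) ^ 2) := by
      rw [Real.sqrt_sq_eq_abs]; exact le_abs_self _
    have h2' : Real.sqrt ((r * T) ^ 2) ≤ Real.sqrt (r ^ 2 * ((r ^ 2 + p ^ 2) *
        ((r ^ 2 + q ^ 2) * (x ^ 2 + (y - r) ^ 2)))) := Real.sqrt_le_sqrt key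
    calc r * T ≤ Real.sqrt ((r * T) ^ 2) := h1'
      _ ≤ Real.sqrt (r ^ 2 * ((r ^ 2 + p ^ 2) * ((r ^ 2 + q ^ 2) *
            (x ^ 2 + (y - r) ^ 2)))) := h2'
      _ = Real.sqrt (r ^ 2) * (Real.sqrt (r ^ 2 + p ^ 2) *
            (Real.sqrt (r ^ 2 + q ^ 2) * Real.sqrt (x ^ 2 + (y - r) ^ 2))) := by
          rw [Real.sqrt_mul (by positivity), Real.sqrt_mul (by positivity),
            Real.sqrt_mul (by positivity)]
  -- multiply the goal by |r| > 0
  rw [ge_iff_le, ← mul_le_mul_iff_of_pos_right (abs_pos.mpr hr)]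
  have habs : ((r ^ 2 + p ^ 2) * |-(q * y) - r * x + q * r| +
      (r ^ 2 + q ^ 2) * |p * y + r * x - p * r|) * |r| =
      (r ^ 2 + p ^ 2) * (r * (-(q * y) - r * x + q * r)) +
      (r ^ 2 + q ^ 2) * (r * (p * y + r * x - p * r)) := by
    have e1 : |-(q * y) - r * x + q * r| * |r| = r * (-(q * y) - r * x + q * r) := by
      rw [← abs_mul, abs_of_nonneg (by linarith [hA] : 0 ≤ (-(q * y) - r * x + q * r) * r)]
      ring
    have e2 : |p * y + r * x - p * r| * |r| = r * (p * y + r * x - p * r) := by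
      rw [← abs_mul, abs_of_nonneg (by linarith [hB] : 0 ≤ (p * y + r * x - p * r) * r)]
      ring
    calc ((r ^ 2 + p ^ 2) * |-(q * y) - r * x + q * r| +
        (r ^ 2 + q ^ 2) * |p * y + r * x - p * r|) * |r|
        = (r ^ 2 + p ^ 2) * (|-(q * y) - r * x + q * r| * |r|) +
          (r ^ 2 + q ^ 2) * (|p * y + r * x - p * r| * |r|) := by ring
      _ = _ := by rw [e1, e2]
  rw [habs]
  have hsum : (r ^ 2 + p ^ 2) * (r * (-(q * y) - r * x + q * r)) +
      (r ^ 2 + q ^ 2) * (r * (p * y + r * x - p * r)) = (q - p) * (r * T) := by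
    rw [hT]; ring
  rw [hsum]
  have habsr : |r| = Real.sqrt (r ^ 2) := (Real.sqrt_sq_eq_abs r).symm
  have habsqp : |q - p| = q - p := abs_of_pos hqp
  rw [habsr, habsqp]
  calc (q - p) * (r * T)
      ≤ (q - p) * (Real.sqrt (r ^ 2) * (Real.sqrt (r ^ 2 + p ^ 2) *
          (Real.sqrt (r ^ 2 + q ^ 2) * Real.sqrt (x ^ 2 + (y - r) ^ 2)))) := by
        exact mul_le_mul_of_nonneg_left hrT (le_of_lt hqp)
    _ = (q - p) * Real.sqrt (r ^ 2 + p ^ 2) * Real.sqrt (r ^ 2 + q ^ 2) *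
          Real.sqrt (x ^ 2 + (y - r) ^ 2) * Real.sqrt (r ^ 2) := by ring
end
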